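/- arXiv:1903.04887 — 3 statements merged into one kernel-verified Lean document; each statement's English description precedes it below -/
import Mathlib

section
/- The quickest misinformation detection problem is equivalent to a fully observable Markov optimal stopping problem in the posterior: the infimum, over all a.s. finite stopping times T ≥ 1 with E[T] < ∞ (with respect to the filtration (F_k)) and all F_T-measurable decisions δ_T : Ω → {0,1}, of the total cost c_I·P(δ_T = 1 and Θ = 0) + c_II·P(δ_T = 0 and Θ = 1) + c·E[T·1_{Θ=1}] equals the infimum, over all a.s. finite stopping times T ≥ 1 with E[T] < ∞, of E[min{c_II·Π_T, c_I·(1 − Π_T)} + c·T·Π_T]. -/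
open MeasureTheory ProbabilityTheory

noncomputable section

variable {Ω : Type} [MeasurableSpace Ω]

/-- The natural filtration generated by the observations `Z 1, …, Z k`
(1-based indexing; `Z 0` plays no role). -/
def qsFiltration (Z : ℕ → Ω → Fin 4) (hZ : ∀ k, Measurable (Z k)) :
    Filtration ℕ (inferInstance : MeasurableSpace Ω) where
  seq k := ⨆ j ∈ Set.Icc 1 k, MeasurableSpace.comap (Z j) inferInstance
  mono' i j hij := biSup_mono fun j' hj' => Set.Icc_subset_Icc_right hij hj'
  le' k := iSup₂_le fun j _ => (hZ j).comap_le

/-- `qsPosterior P Θ Z hZ k` is (a version of) the conditional probability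
`P(Θ = 1 | Z 1, …, Z k)`, realized as the conditional expectation of the
indicator of `{Θ = 1}` given the natural filtration of `Z` at time `k`. -/
def qsPosterior (P : Measure Ω) (Θ : Ω → Fin 2) (Z : ℕ → Ω → Fin 4)
    (hZ : ∀ k, Measurable (Z k)) (k : ℕ) : Ω → ℝ :=
  P[fun ω => if Θ ω = 1 then (1 : ℝ) else 0 | qsFiltration Z hZ k]

/-- `P` is the law under which `Θ = 1` with probability `π₁`, `Θ = 0` with probability
`1 - π₁`, and conditionally on `Θ = i` the process `Z 1, Z 2, …` is a time-homogeneous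
Markov chain with transition probabilities `α i (·|·)` and `Z 1` uniform on `Fin 4`,
expressed through its finite-dimensional distributions. -/
def IsQSLaw (P : Measure Ω) (Θ : Ω → Fin 2) (Z : ℕ → Ω → Fin 4)
    (α : Fin 2 → Fin 4 → Fin 4 → ℝ) (π₁ : ℝ) : Prop :=
  ∀ k : ℕ, 1 ≤ k → ∀ (i : Fin 2) (zs : ℕ → Fin 4),
    (P {ω | Θ ω = i ∧ ∀ j, 1 ≤ j → j ≤ k → Z j ω = zs j}).toReal
      = (if i = 1 then π₁ else 1 - π₁) * (1 / 4) *
          ∏ j ∈ Finset.Ico 1 k, α i (zs (j + 1)) (zs j)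

/-- `P` is the law under which `Θ = 1` with probability `π`, and conditionally on `Θ = i`
the process `Z 1, Z 2, …` is a Markov chain with transition probabilities `α i (·|·)`
started from `Z 1 = z`. -/
def IsQSLawFrom (P : Measure Ω) (Θ : Ω → Fin 2) (Z : ℕ → Ω → Fin 4)
    (α : Fin 2 → Fin 4 → Fin 4 → ℝ) (π : ℝ) (z : Fin 4) : Prop :=
  ∀ k : ℕ, 1 ≤ k → ∀ (i : Fin 2) (zs : ℕ → Fin 4),
    (P {ω | Θ ω = i ∧ ∀ j, 1 ≤ j → j ≤ k → Z j ω = zs j}).toReal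
      = if zs 1 = z then
          (if i = 1 then π else 1 - π) * ∏ j ∈ Finset.Ico 1 k, α i (zs (j + 1)) (zs j)
        else 0

/-- The immediate stopping cost `g(π) = min (c_II π) (c_I (1 - π))`. -/
def qsG (cI cII : ℝ) (π : ℝ) : ℝ := min (cII * π) (cI * (1 - π))

/-- The value function `s₁(π, z)`: the infimum over a.s. finite stopping times `T ≥ 1`
with `E[T] < ∞` of `E_{π,z}[g(Π_T) + c T Π_T]`, for the chain with prior belief `π`
and initial observation `z` whose law is `Pf π z`. -/
def qsValue (Pf : ℝ → Fin 4 → Measure Ω) (Θ : Ω → Fin 2) (Z : ℕ → Ω → Fin 4)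
    (hZ : ∀ k, Measurable (Z k)) (cI cII c : ℝ) (π : ℝ) (z : Fin 4) : ℝ :=
  sInf {x : ℝ | ∃ T : Ω → ℕ, IsStoppingTime (qsFiltration Z hZ) (fun ω => (T ω : WithTop ℕ)) ∧ (∀ ω, 1 ≤ T ω) ∧
    Integrable (fun ω => (T ω : ℝ)) (Pf π z) ∧
    x = ∫ ω, (qsG cI cII (qsPosterior (Pf π z) Θ Z hZ (T ω) ω)
          + c * (T ω : ℝ) * qsPosterior (Pf π z) Θ Z hZ (T ω) ω) ∂(Pf π z)}

section QSAuxProof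

variable {P : Measure Ω} [IsProbabilityMeasure P]
  {Θ : Ω → Fin 2} {Z : ℕ → Ω → Fin 4} {hZ : ∀ k, Measurable (Z k)} {T : Ω → ℕ}

/-- The indicator of `{Θ = 1}`. -/
def qsF1 (Θ : Ω → Fin 2) : Ω → ℝ := fun ω => if Θ ω = 1 then (1 : ℝ) else 0

lemma qsF1_meas (hΘ : Measurable Θ) : Measurable (qsF1 Θ) :=
  Measurable.ite (hΘ (measurableSet_singleton 1)) measurable_const measurable_const

lemma qsF1_int (hΘ : Measurable Θ) : Integrable (qsF1 Θ) P :=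
  (integrable_const (1 : ℝ)).mono' (qsF1_meas hΘ).aestronglyMeasurable
    (Filter.Eventually.of_forall fun ω => by
      simp only [qsF1]; split <;> simp)

lemma qsPosterior_def' (k : ℕ) :
    qsPosterior P Θ Z hZ k = P[qsF1 Θ | qsFiltration Z hZ k] := rfl

lemma qsPosterior_bounds (hΘ : Measurable Θ) :
    ∀ᵐ ω ∂P, ∀ k, 0 ≤ qsPosterior P Θ Z hZ k ω ∧ qsPosterior P Θ Z hZ k ω ≤ 1 := by
  rw [ae_all_iff]
  intro k
  have h0 : 0 ≤ᵐ[P] qsPosterior P Θ Z hZ k := by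
    rw [qsPosterior_def']
    exact condExp_nonneg (Filter.Eventually.of_forall fun ω => by
      simp only [qsF1]; split <;> norm_num)
  have h1 : qsPosterior P Θ Z hZ k ≤ᵐ[P] fun _ => (1 : ℝ) := by
    rw [qsPosterior_def']
    have := condExp_mono (μ := P) (m := qsFiltration Z hZ k) (qsF1_int hΘ)
      (integrable_const (1 : ℝ))
      (Filter.Eventually.of_forall fun ω => by simp only [qsF1]; split <;> norm_num)
    rwa [condExp_const ((qsFiltration Z hZ).le k)] at this
  filter_upwards [h0, h1] with ω a b using ⟨a, b⟩

lemma qsPosterior_adapted : StronglyAdapted (qsFiltration Z hZ) (qsPosterior P Θ Z hZ) :=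
  fun _ => stronglyMeasurable_condExp

/-- The stopped posterior `Π_T` is measurable w.r.t. the stopping-time σ-algebra. -/
lemma qsStopped_meas (hT : IsStoppingTime (qsFiltration Z hZ) (fun ω => (T ω : WithTop ℕ))) :
    Measurable[hT.measurableSpace] fun ω => qsPosterior P Θ Z hZ (T ω) ω :=
  measurable_stoppedValue (qsPosterior_adapted (P := P)).progMeasurable_of_discrete hT

lemma qsStopped_meas' (hT : IsStoppingTime (qsFiltration Z hZ) (fun ω => (T ω : WithTop ℕ))) :
    Measurable fun ω => qsPosterior P Θ Z hZ (T ω) ω :=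
  (qsStopped_meas hT).mono hT.measurableSpace_le le_rfl

lemma qsStopped_int (hΘ : Measurable Θ) (hT : IsStoppingTime (qsFiltration Z hZ) (fun ω => (T ω : WithTop ℕ))) :
    Integrable (fun ω => qsPosterior P Θ Z hZ (T ω) ω) P :=
  (integrable_const (1 : ℝ)).mono' (qsStopped_meas' hT).aestronglyMeasurable
    ((qsPosterior_bounds hΘ).mono fun ω h => by
      have := h (T ω); rw [Real.norm_eq_abs, abs_le]; constructor <;> linarith [this.1, this.2])

lemma qs_set_eq (k : ℕ) :
    {ω | T ω = k} = {ω | (T ω : WithTop ℕ) = (k : WithTop ℕ)} := by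
  ext ω; simp

lemma qs_meas_eq (hT : IsStoppingTime (qsFiltration Z hZ) (fun ω => (T ω : WithTop ℕ))) (k : ℕ) :
    MeasurableSet[qsFiltration Z hZ k] {ω | T ω = k} := by
  rw [qs_set_eq]; exact hT.measurableSet_eq k

lemma qsTmeas (hT : IsStoppingTime (qsFiltration Z hZ) (fun ω => (T ω : WithTop ℕ))) :
    Measurable fun ω => (T ω : ℝ) := by
  have hTm : Measurable T := fun s _ => by
    have : T ⁻¹' s = ⋃ k ∈ s, {ω | T ω = k} := by
      ext ω; simp [Set.mem_iUnion, eq_comm]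
    rw [this]
    exact MeasurableSet.biUnion s.to_countable fun k _ =>
      (qsFiltration Z hZ).le k _ (qs_meas_eq hT k)
  exact (measurable_from_top (f := (Nat.cast : ℕ → ℝ))).comp hTm

lemma qsTStopped_int (hΘ : Measurable Θ) (hT : IsStoppingTime (qsFiltration Z hZ) (fun ω => (T ω : WithTop ℕ)))
    (hTint : Integrable (fun ω => (T ω : ℝ)) P) :
    Integrable (fun ω => (T ω : ℝ) * qsPosterior P Θ Z hZ (T ω) ω) P :=
  hTint.mono' ((qsTmeas hT).mul (qsStopped_meas' hT)).aestronglyMeasurable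
    ((qsPosterior_bounds hΘ).mono fun ω h => by
      have h' := h (T ω)
      rw [Real.norm_eq_abs, abs_mul, Nat.abs_cast]
      calc (T ω : ℝ) * |qsPosterior P Θ Z hZ (T ω) ω| ≤ (T ω : ℝ) * 1 := by
            apply mul_le_mul_of_nonneg_left _ (Nat.cast_nonneg _)
            rw [abs_le]; constructor <;> linarith [h'.1, h'.2]
        _ = (T ω : ℝ) := mul_one _)

/-- The intersection of a `F_T`-measurable set with `{T = k}` is `F_k`-measurable. -/
lemma qs_inter_eq_meas (hT : IsStoppingTime (qsFiltration Z hZ) (fun ω => (T ω : WithTop ℕ))) {A : Set Ω}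
    (hA : MeasurableSet[hT.measurableSpace] A) (k : ℕ) :
    MeasurableSet[qsFiltration Z hZ k] (A ∩ {ω | T ω = k}) := by
  have h1 : MeasurableSet[hT.measurableSpace] {ω | T ω = k} := by
    rw [qs_set_eq, ← Set.univ_inter {ω | (T ω : WithTop ℕ) = (k : WithTop ℕ)}]
    exact (hT.measurableSet_inter_eq_iff Set.univ k).mpr
      (by rw [Set.univ_inter]; exact hT.measurableSet_eq k)
  rw [qs_set_eq] at h1 ⊢
  exact (hT.measurableSet_inter_eq_iff A k).mp (hA.inter h1)

/-- Partition an integral over an `F_T`-measurable set according to the value of `T`. -/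
lemma qs_integral_partition (hT : IsStoppingTime (qsFiltration Z hZ) (fun ω => (T ω : WithTop ℕ))) {A : Set Ω}
    (hA : MeasurableSet A) {g : Ω → ℝ} (hg : Integrable g P) :
    ∫ ω in A, g ω ∂P = ∑' k, ∫ ω in A ∩ {ω | T ω = k}, g ω ∂P := by
  have hU : (⋃ k, A ∩ {ω | T ω = k}) = A := by
    ext ω; simp [Set.mem_iUnion]
  have hmk : ∀ k, MeasurableSet (A ∩ {ω | T ω = k}) := fun k =>
    hA.inter ((qsFiltration Z hZ).le k _ (qs_meas_eq hT k))
  have hd : Pairwise (Function.onFun Disjoint fun k => A ∩ {ω | T ω = k}) := by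
    intro i j hij
    rw [Function.onFun, Set.disjoint_left]
    rintro ω ⟨-, h1⟩ ⟨-, h2⟩
    exact hij (h1.symm.trans h2)
  calc ∫ ω in A, g ω ∂P = ∫ ω in ⋃ k, A ∩ {ω | T ω = k}, g ω ∂P := by rw [hU]
    _ = ∑' k, ∫ ω in A ∩ {ω | T ω = k}, g ω ∂P := integral_iUnion hmk hd hg.integrableOn

/-- Key identity: the integral of the indicator of `{Θ = 1}` over an `F_T`-measurable set
equals the integral of the stopped posterior over that set. -/
lemma qs_setIntegral_f1 (hΘ : Measurable Θ) (hT : IsStoppingTime (qsFiltration Z hZ) (fun ω => (T ω : WithTop ℕ)))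
    {A : Set Ω} (hA : MeasurableSet[hT.measurableSpace] A) :
    ∫ ω in A, qsF1 Θ ω ∂P = ∫ ω in A, qsPosterior P Θ Z hZ (T ω) ω ∂P := by
  have hA' : MeasurableSet A := hT.measurableSpace_le A hA
  rw [qs_integral_partition hT hA' (qsF1_int hΘ),
    qs_integral_partition hT hA' (qsStopped_int hΘ hT)]
  refine tsum_congr fun k => ?_
  have hsk : MeasurableSet[qsFiltration Z hZ k] (A ∩ {ω | T ω = k}) :=
    qs_inter_eq_meas hT hA k
  have hsk' : MeasurableSet (A ∩ {ω | T ω = k}) := (qsFiltration Z hZ).le k _ hsk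
  calc ∫ ω in A ∩ {ω | T ω = k}, qsF1 Θ ω ∂P
      = ∫ ω in A ∩ {ω | T ω = k}, qsPosterior P Θ Z hZ k ω ∂P := by
        rw [qsPosterior_def']
        exact (setIntegral_condExp ((qsFiltration Z hZ).le k) (qsF1_int hΘ) hsk).symm
    _ = ∫ ω in A ∩ {ω | T ω = k}, qsPosterior P Θ Z hZ (T ω) ω ∂P := by
        refine setIntegral_congr_fun hsk' fun ω hω => ?_
        have h2 : T ω = k := hω.2
        rw [h2]

/-- Key identity for the time-cost term. -/
lemma qs_integral_Tf1 (hΘ : Measurable Θ) (hT : IsStoppingTime (qsFiltration Z hZ) (fun ω => (T ω : WithTop ℕ)))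
    (hTint : Integrable (fun ω => (T ω : ℝ)) P) :
    ∫ ω, (T ω : ℝ) * qsF1 Θ ω ∂P = ∫ ω, (T ω : ℝ) * qsPosterior P Θ Z hZ (T ω) ω ∂P := by
  have hint1 : Integrable (fun ω => (T ω : ℝ) * qsF1 Θ ω) P :=
    hTint.mono' ((qsTmeas hT).mul (qsF1_meas hΘ)).aestronglyMeasurable
      (Filter.Eventually.of_forall fun ω => by
        rw [Real.norm_eq_abs, abs_mul, Nat.abs_cast]
        calc (T ω : ℝ) * |qsF1 Θ ω| ≤ (T ω : ℝ) * 1 := by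
              apply mul_le_mul_of_nonneg_left _ (Nat.cast_nonneg _)
              simp only [qsF1]; split <;> norm_num
          _ = (T ω : ℝ) := mul_one _)
  have hint2 := qsTStopped_int hΘ hT hTint
  rw [← setIntegral_univ (f := fun ω => (T ω : ℝ) * qsF1 Θ ω),
    ← setIntegral_univ (f := fun ω => (T ω : ℝ) * qsPosterior P Θ Z hZ (T ω) ω),
    qs_integral_partition hT MeasurableSet.univ hint1,
    qs_integral_partition hT MeasurableSet.univ hint2]
  refine tsum_congr fun k => ?_
  have hsk : MeasurableSet[qsFiltration Z hZ k] (Set.univ ∩ {ω | T ω = k}) := by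
    rw [Set.univ_inter]; exact qs_meas_eq hT k
  have hsk' : MeasurableSet (Set.univ ∩ {ω | T ω = k}) := (qsFiltration Z hZ).le k _ hsk
  calc ∫ ω in Set.univ ∩ {ω | T ω = k}, (T ω : ℝ) * qsF1 Θ ω ∂P
      = ∫ ω in Set.univ ∩ {ω | T ω = k}, (k : ℝ) * qsF1 Θ ω ∂P := by
        refine setIntegral_congr_fun hsk' fun ω hω => ?_
        have h2 : T ω = k := hω.2
        rw [h2]
    _ = (k : ℝ) * ∫ ω in Set.univ ∩ {ω | T ω = k}, qsF1 Θ ω ∂P := integral_const_mul _ _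
    _ = (k : ℝ) * ∫ ω in Set.univ ∩ {ω | T ω = k}, qsPosterior P Θ Z hZ k ω ∂P := by
        rw [qsPosterior_def', setIntegral_condExp ((qsFiltration Z hZ).le k) (qsF1_int hΘ) hsk]
    _ = ∫ ω in Set.univ ∩ {ω | T ω = k}, (k : ℝ) * qsPosterior P Θ Z hZ k ω ∂P :=
        (integral_const_mul _ _).symm
    _ = ∫ ω in Set.univ ∩ {ω | T ω = k}, (T ω : ℝ) * qsPosterior P Θ Z hZ (T ω) ω ∂P := by
        refine setIntegral_congr_fun hsk' fun ω hω => ?_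
        have h2 : T ω = k := hω.2
        rw [h2]

/-- Probability of an intersection as a set integral of an indicator. -/
lemma qs_prob_eq (hΘ : Measurable Θ) {A : Set Ω} (hA : MeasurableSet A) (i : Fin 2) :
    (P (A ∩ {ω | Θ ω = i})).toReal = ∫ ω in A, (if Θ ω = i then (1 : ℝ) else 0) ∂P := by
  have hind : (fun ω => if Θ ω = i then (1 : ℝ) else 0)
      = Set.indicator {ω | Θ ω = i} (fun _ => (1 : ℝ)) := by
    ext ω; rw [Set.indicator_apply]; rfl
  have ht : MeasurableSet {ω | Θ ω = i} := hΘ (measurableSet_singleton i)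
  rw [hind, setIntegral_indicator ht, setIntegral_const, smul_eq_mul, mul_one]
  rfl

/-- Integrability of the decision-cost integrand. -/
lemma qs_hdelta_int (hΘ : Measurable Θ) (hT : IsStoppingTime (qsFiltration Z hZ) (fun ω => (T ω : WithTop ℕ)))
    (δ : Ω → Fin 2) (hδ : Measurable[hT.measurableSpace] δ) {cI cII : ℝ}
    (hcI : 0 < cI) (hcII : 0 < cII) :
    Integrable (fun ω => if δ ω = 1 then cI * (1 - qsPosterior P Θ Z hZ (T ω) ω)
      else cII * qsPosterior P Θ Z hZ (T ω) ω) P := by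
  have hA : MeasurableSet {ω | δ ω = 1} :=
    hT.measurableSpace_le _ (hδ (measurableSet_singleton 1))
  have hmeas : Measurable (fun ω => if δ ω = 1 then cI * (1 - qsPosterior P Θ Z hZ (T ω) ω)
      else cII * qsPosterior P Θ Z hZ (T ω) ω) :=
    Measurable.ite hA (measurable_const.mul (measurable_const.sub (qsStopped_meas' hT)))
      (measurable_const.mul (qsStopped_meas' hT))
  refine (integrable_const (cI + cII)).mono' hmeas.aestronglyMeasurable ?_
  filter_upwards [qsPosterior_bounds hΘ (hZ := hZ)] with ω h
  have h' := h (T ω)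
  by_cases hd : δ ω = 1
  · rw [if_pos hd, Real.norm_eq_abs,
      abs_of_nonneg (mul_nonneg hcI.le (by linarith [h'.2]))]
    nlinarith [h'.1, h'.2]
  · rw [if_neg hd, Real.norm_eq_abs, abs_of_nonneg (mul_nonneg hcII.le h'.1)]
    nlinarith [h'.1, h'.2]

/-- The cost identity: the Bayes risk of a decision `δ` plus the expected time cost can be
written as an expectation of a functional of the stopped posterior. -/
lemma qs_cost_identity (hΘ : Measurable Θ) (hT : IsStoppingTime (qsFiltration Z hZ) (fun ω => (T ω : WithTop ℕ)))
    (hTint : Integrable (fun ω => (T ω : ℝ)) P)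
    (δ : Ω → Fin 2) (hδ : Measurable[hT.measurableSpace] δ) {cI cII c : ℝ}
    (hcI : 0 < cI) (hcII : 0 < cII) :
    cI * (P {ω | δ ω = 1 ∧ Θ ω = 0}).toReal + cII * (P {ω | δ ω = 0 ∧ Θ ω = 1}).toReal
      + c * ∫ ω, (T ω : ℝ) * qsF1 Θ ω ∂P
    = ∫ ω, ((if δ ω = 1 then cI * (1 - qsPosterior P Θ Z hZ (T ω) ω)
          else cII * qsPosterior P Θ Z hZ (T ω) ω)
        + c * (T ω : ℝ) * qsPosterior P Θ Z hZ (T ω) ω) ∂P := by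
  have hAms : MeasurableSet[hT.measurableSpace] {ω | δ ω = 1} := hδ (measurableSet_singleton 1)
  have hA : MeasurableSet {ω | δ ω = 1} := hT.measurableSpace_le _ hAms
  have hPiTint : Integrable (fun ω => qsPosterior P Θ Z hZ (T ω) ω) P := qsStopped_int hΘ hT
  have hPiTion : IntegrableOn (fun ω => qsPosterior P Θ Z hZ (T ω) ω) {ω | δ ω = 1} P :=
    hPiTint.integrableOn
  -- Term 2 : c_II P(δ = 0, Θ = 1)
  have hset2 : {ω | δ ω = 0 ∧ Θ ω = 1} = {ω | δ ω = 1}ᶜ ∩ {ω | Θ ω = 1} := by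
    ext ω
    have : δ ω = 0 ↔ ¬ δ ω = 1 := by
      rcases (by decide : ∀ x : Fin 2, x = 0 ∨ x = 1) (δ ω) with h | h <;> simp [h]
    simp [this]
  have hterm2 : (P {ω | δ ω = 0 ∧ Θ ω = 1}).toReal
      = ∫ ω in {ω | δ ω = 1}ᶜ, qsPosterior P Θ Z hZ (T ω) ω ∂P := by
    rw [hset2, qs_prob_eq hΘ hA.compl 1]
    exact qs_setIntegral_f1 hΘ hT hAms.compl
  -- Term 1 : c_I P(δ = 1, Θ = 0)
  have hterm1 : (P {ω | δ ω = 1 ∧ Θ ω = 0}).toReal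
      = ∫ ω in {ω | δ ω = 1}, (1 - qsPosterior P Θ Z hZ (T ω) ω) ∂P := by
    have hset1 : {ω | δ ω = 1 ∧ Θ ω = 0} = {ω | δ ω = 1} ∩ {ω | Θ ω = 0} := rfl
    rw [hset1, qs_prob_eq hΘ hA 0]
    have hpt : ∀ ω, (if Θ ω = 0 then (1 : ℝ) else 0) = 1 - qsF1 Θ ω := by
      intro ω
      rcases (by decide : ∀ x : Fin 2, x = 0 ∨ x = 1) (Θ ω) with h | h <;> simp [qsF1, h]
    calc ∫ ω in {ω | δ ω = 1}, (if Θ ω = 0 then (1 : ℝ) else 0) ∂P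
        = ∫ ω in {ω | δ ω = 1}, (1 - qsF1 Θ ω) ∂P := by
          exact setIntegral_congr_fun hA fun ω _ => hpt ω
      _ = ∫ ω in {ω | δ ω = 1}, (1 : ℝ) ∂P - ∫ ω in {ω | δ ω = 1}, qsF1 Θ ω ∂P :=
          integral_sub (integrable_const 1).integrableOn (qsF1_int hΘ).integrableOn
      _ = ∫ ω in {ω | δ ω = 1}, (1 : ℝ) ∂P
          - ∫ ω in {ω | δ ω = 1}, qsPosterior P Θ Z hZ (T ω) ω ∂P := by
          rw [qs_setIntegral_f1 hΘ hT hAms]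
      _ = ∫ ω in {ω | δ ω = 1}, (1 - qsPosterior P Θ Z hZ (T ω) ω) ∂P :=
          (integral_sub (integrable_const 1).integrableOn hPiTion).symm
  -- Term 3
  have hterm3 := qs_integral_Tf1 hΘ hT hTint
  -- Right-hand side
  have hhint := qs_hdelta_int (P := P) hΘ hT δ hδ hcI hcII
  have hcTPi : Integrable (fun ω => c * (T ω : ℝ) * qsPosterior P Θ Z hZ (T ω) ω) P := by
    have := (qsTStopped_int hΘ hT hTint).const_mul c
    refine this.congr (Filter.Eventually.of_forall fun ω => ?_)
    ring
  rw [integral_add hhint hcTPi]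
  have hsplit : ∫ ω, (if δ ω = 1 then cI * (1 - qsPosterior P Θ Z hZ (T ω) ω)
        else cII * qsPosterior P Θ Z hZ (T ω) ω) ∂P
      = cI * ∫ ω in {ω | δ ω = 1}, (1 - qsPosterior P Θ Z hZ (T ω) ω) ∂P
        + cII * ∫ ω in {ω | δ ω = 1}ᶜ, qsPosterior P Θ Z hZ (T ω) ω ∂P := by
    rw [← integral_add_compl hA hhint]
    congr 1
    · rw [← integral_const_mul]
      refine setIntegral_congr_fun hA fun ω hω => ?_
      have hω' : δ ω = 1 := hω
      rw [if_pos hω']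
    · rw [← integral_const_mul]
      refine setIntegral_congr_fun hA.compl fun ω hω => ?_
      have hω' : ¬ δ ω = 1 := hω
      rw [if_neg hω']
  have hc3 : ∫ ω, c * (T ω : ℝ) * qsPosterior P Θ Z hZ (T ω) ω ∂P
      = c * ∫ ω, (T ω : ℝ) * qsPosterior P Θ Z hZ (T ω) ω ∂P := by
    rw [← integral_const_mul]
    congr 1; funext ω; ring
  rw [hsplit, hc3, hterm1, hterm2, hterm3]

end QSAuxProof

/-- The quickest misinformation detection problem is equivalent to a
fully observable Markov optimal stopping problem in the posterior: the infimum, over all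
a.s. finite stopping times `T ≥ 1` with `E[T] < ∞` (with respect to the filtration
`(F_k)`) and all `F_T`-measurable decisions `δ_T : Ω → {0,1}`, of the total cost
`c_I P(δ_T = 1, Θ = 0) + c_II P(δ_T = 0, Θ = 1) + c E[T 1_{Θ=1}]` equals the infimum,
over all a.s. finite stopping times `T ≥ 1` with `E[T] < ∞`, of
`E[min (c_II Π_T) (c_I (1 - Π_T)) + c T Π_T]`. -/
theorem quickstop_equivalence_markov_optimal_stopping
    {Ω : Type} [MeasurableSpace Ω] (P : Measure Ω) [IsProbabilityMeasure P]
    (Θ : Ω → Fin 2) (Z : ℕ → Ω → Fin 4)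
    (hΘ : Measurable Θ) (hZ : ∀ k, Measurable (Z k))
    (α : Fin 2 → Fin 4 → Fin 4 → ℝ)
    (hαpos : ∀ i z z', 0 < α i z' z)
    (hαsum : ∀ i z, ∑ z', α i z' z = 1)
    (π₁ : ℝ) (hπ : π₁ ∈ Set.Ioo (0 : ℝ) 1)
    (hlaw : IsQSLaw P Θ Z α π₁)
    (cI cII c : ℝ) (hcI : 0 < cI) (hcII : 0 < cII) (hc : 0 < c) :
    sInf {x : ℝ | ∃ T : Ω → ℕ, ∃ hT : IsStoppingTime (qsFiltration Z hZ) (fun ω => (T ω : WithTop ℕ)),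
        (∀ ω, 1 ≤ T ω) ∧ Integrable (fun ω => (T ω : ℝ)) P ∧
        ∃ δ : Ω → Fin 2, Measurable[hT.measurableSpace] δ ∧
          x = cI * (P {ω | δ ω = 1 ∧ Θ ω = 0}).toReal
            + cII * (P {ω | δ ω = 0 ∧ Θ ω = 1}).toReal
            + c * ∫ ω, (T ω : ℝ) * (if Θ ω = 1 then (1 : ℝ) else 0) ∂P}
      = sInf {x : ℝ | ∃ T : Ω → ℕ, IsStoppingTime (qsFiltration Z hZ) (fun ω => (T ω : WithTop ℕ)) ∧
          (∀ ω, 1 ≤ T ω) ∧ Integrable (fun ω => (T ω : ℝ)) P ∧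
          x = ∫ ω, (min (cII * qsPosterior P Θ Z hZ (T ω) ω)
                (cI * (1 - qsPosterior P Θ Z hZ (T ω) ω))
              + c * (T ω : ℝ) * qsPosterior P Θ Z hZ (T ω) ω) ∂P} := by
  classical
  have hbd : ∀ᵐ ω ∂P, ∀ k, 0 ≤ qsPosterior P Θ Z hZ k ω ∧ qsPosterior P Θ Z hZ k ω ≤ 1 :=
    qsPosterior_bounds hΘ
  -- Integrability of the posterior-cost integrand
  have hGint : ∀ (T : Ω → ℕ), IsStoppingTime (qsFiltration Z hZ) (fun ω => (T ω : WithTop ℕ)) →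
      Integrable (fun ω => (T ω : ℝ)) P →
      Integrable (fun ω => min (cII * qsPosterior P Θ Z hZ (T ω) ω)
          (cI * (1 - qsPosterior P Θ Z hZ (T ω) ω))
        + c * (T ω : ℝ) * qsPosterior P Θ Z hZ (T ω) ω) P := by
    intro T hT hTint
    have hPiTint : Integrable (fun ω => qsPosterior P Θ Z hZ (T ω) ω) P := qsStopped_int hΘ hT
    have ha : Integrable (fun ω => cII * qsPosterior P Θ Z hZ (T ω) ω) P :=
      hPiTint.const_mul cII
    have hb : Integrable (fun ω => cI * (1 - qsPosterior P Θ Z hZ (T ω) ω)) P :=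
      ((integrable_const (1 : ℝ)).sub hPiTint).const_mul cI
    have h1 : Integrable (fun ω => min (cII * qsPosterior P Θ Z hZ (T ω) ω)
        (cI * (1 - qsPosterior P Θ Z hZ (T ω) ω))) P :=
      (ha.inf hb).congr (Filter.Eventually.of_forall fun ω => by
        simp [Pi.inf_apply])
    have h2 : Integrable (fun ω => c * (T ω : ℝ) * qsPosterior P Θ Z hZ (T ω) ω) P :=
      ((qsTStopped_int hΘ hT hTint).const_mul c).congr
        (Filter.Eventually.of_forall fun ω => by ring)
    exact h1.add h2
  have hHint : ∀ (T : Ω → ℕ) (hT : IsStoppingTime (qsFiltration Z hZ) (fun ω => (T ω : WithTop ℕ))),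
      Integrable (fun ω => (T ω : ℝ)) P → ∀ δ : Ω → Fin 2,
      Measurable[hT.measurableSpace] δ →
      Integrable (fun ω => (if δ ω = 1 then cI * (1 - qsPosterior P Θ Z hZ (T ω) ω)
          else cII * qsPosterior P Θ Z hZ (T ω) ω)
        + c * (T ω : ℝ) * qsPosterior P Θ Z hZ (T ω) ω) P := by
    intro T hT hTint δ hδ
    refine (qs_hdelta_int (P := P) hΘ hT δ hδ hcI hcII).add ?_
    exact ((qsTStopped_int hΘ hT hTint).const_mul c).congr
      (Filter.Eventually.of_forall fun ω => by ring)
  -- The posterior cost is a lower bound for the cost of any decision rule.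
  have hmono : ∀ (T : Ω → ℕ) (hT : IsStoppingTime (qsFiltration Z hZ) (fun ω => (T ω : WithTop ℕ))),
      Integrable (fun ω => (T ω : ℝ)) P → ∀ δ : Ω → Fin 2,
      Measurable[hT.measurableSpace] δ →
      ∫ ω, (min (cII * qsPosterior P Θ Z hZ (T ω) ω)
            (cI * (1 - qsPosterior P Θ Z hZ (T ω) ω))
          + c * (T ω : ℝ) * qsPosterior P Θ Z hZ (T ω) ω) ∂P
        ≤ cI * (P {ω | δ ω = 1 ∧ Θ ω = 0}).toReal
          + cII * (P {ω | δ ω = 0 ∧ Θ ω = 1}).toReal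
          + c * ∫ ω, (T ω : ℝ) * qsF1 Θ ω ∂P := by
    intro T hT hTint δ hδ
    have hid := qs_cost_identity (c := c) hΘ hT hTint δ hδ hcI hcII
    refine le_of_le_of_eq (integral_mono (hGint T hT hTint) (hHint T hT hTint δ hδ)
      fun ω => ?_) hid.symm
    refine add_le_add_left ?_ _
    by_cases hd : δ ω = 1
    · rw [if_pos hd]; exact min_le_right _ _
    · rw [if_neg hd]; exact min_le_left _ _
  -- The posterior cost is attained by the Bayes decision rule.
  have hopt : ∀ (T : Ω → ℕ) (hT : IsStoppingTime (qsFiltration Z hZ) (fun ω => (T ω : WithTop ℕ))),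
      Integrable (fun ω => (T ω : ℝ)) P →
      ∃ δ : Ω → Fin 2, Measurable[hT.measurableSpace] δ ∧
        cI * (P {ω | δ ω = 1 ∧ Θ ω = 0}).toReal
          + cII * (P {ω | δ ω = 0 ∧ Θ ω = 1}).toReal
          + c * ∫ ω, (T ω : ℝ) * qsF1 Θ ω ∂P
        = ∫ ω, (min (cII * qsPosterior P Θ Z hZ (T ω) ω)
              (cI * (1 - qsPosterior P Θ Z hZ (T ω) ω))
            + c * (T ω : ℝ) * qsPosterior P Θ Z hZ (T ω) ω) ∂P := by
    intro T hT hTint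
    refine ⟨fun ω => if cII * qsPosterior P Θ Z hZ (T ω) ω
        ≤ cI * (1 - qsPosterior P Θ Z hZ (T ω) ω) then 0 else 1, ?_, ?_⟩
    · exact Measurable.ite (measurableSet_le ((qsStopped_meas hT).const_mul cII)
        (((qsStopped_meas hT).const_sub 1).const_mul cI)) measurable_const measurable_const
    · rw [qs_cost_identity (c := c) hΘ hT hTint _ (Measurable.ite
        (measurableSet_le ((qsStopped_meas hT).const_mul cII)
          (((qsStopped_meas hT).const_sub 1).const_mul cI)) measurable_const measurable_const)
        hcI hcII]
      congr 1
      funext ω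
      by_cases hcond : cII * qsPosterior P Θ Z hZ (T ω) ω
          ≤ cI * (1 - qsPosterior P Θ Z hZ (T ω) ω)
      · rw [if_pos hcond, if_neg (by decide : ¬ (0 : Fin 2) = 1), min_eq_left hcond]
      · rw [if_neg hcond, if_pos rfl, min_eq_right (le_of_not_ge hcond)]
  -- Bounds and nonemptiness
  have hbd2 : ∀ y ∈ {x : ℝ | ∃ T : Ω → ℕ, IsStoppingTime (qsFiltration Z hZ) (fun ω => (T ω : WithTop ℕ)) ∧
      (∀ ω, 1 ≤ T ω) ∧ Integrable (fun ω => (T ω : ℝ)) P ∧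
      x = ∫ ω, (min (cII * qsPosterior P Θ Z hZ (T ω) ω)
            (cI * (1 - qsPosterior P Θ Z hZ (T ω) ω))
          + c * (T ω : ℝ) * qsPosterior P Θ Z hZ (T ω) ω) ∂P}, (0 : ℝ) ≤ y := by
    rintro y ⟨T, hT, hT1, hTint, rfl⟩
    refine integral_nonneg_of_ae ?_
    filter_upwards [hbd] with ω h
    have h' := h (T ω)
    have hm : 0 ≤ min (cII * qsPosterior P Θ Z hZ (T ω) ω)
        (cI * (1 - qsPosterior P Θ Z hZ (T ω) ω)) :=
      le_min (mul_nonneg hcII.le h'.1) (mul_nonneg hcI.le (by linarith [h'.2]))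
    have hct : 0 ≤ c * (T ω : ℝ) * qsPosterior P Θ Z hZ (T ω) ω :=
      mul_nonneg (mul_nonneg hc.le (Nat.cast_nonneg _)) h'.1
    exact add_nonneg hm hct
  have hbd1 : ∀ y ∈ {x : ℝ | ∃ T : Ω → ℕ, ∃ hT : IsStoppingTime (qsFiltration Z hZ) (fun ω => (T ω : WithTop ℕ)),
      (∀ ω, 1 ≤ T ω) ∧ Integrable (fun ω => (T ω : ℝ)) P ∧
      ∃ δ : Ω → Fin 2, Measurable[hT.measurableSpace] δ ∧
        x = cI * (P {ω | δ ω = 1 ∧ Θ ω = 0}).toReal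
          + cII * (P {ω | δ ω = 0 ∧ Θ ω = 1}).toReal
          + c * ∫ ω, (T ω : ℝ) * (if Θ ω = 1 then (1 : ℝ) else 0) ∂P}, (0 : ℝ) ≤ y := by
    rintro y ⟨T, hT, hT1, hTint, δ, hδ, rfl⟩
    have h3 : 0 ≤ ∫ ω, (T ω : ℝ) * (if Θ ω = 1 then (1 : ℝ) else 0) ∂P :=
      integral_nonneg fun ω => mul_nonneg (Nat.cast_nonneg _)
        (by by_cases h : Θ ω = 1 <;> simp [h])
    have := ENNReal.toReal_nonneg (a := P {ω | δ ω = 1 ∧ Θ ω = 0})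
    have := ENNReal.toReal_nonneg (a := P {ω | δ ω = 0 ∧ Θ ω = 1})
    have := mul_nonneg hc.le h3
    nlinarith [mul_nonneg hcI.le (ENNReal.toReal_nonneg (a := P {ω | δ ω = 1 ∧ Θ ω = 0})),
      mul_nonneg hcII.le (ENNReal.toReal_nonneg (a := P {ω | δ ω = 0 ∧ Θ ω = 1}))]
  apply le_antisymm
  · refine csInf_le_csInf ⟨0, hbd1⟩
      ⟨_, fun _ => 1, isStoppingTime_const _ 1, fun _ => le_refl 1, integrable_const _, rfl⟩ ?_
    rintro x ⟨T, hT, hT1, hTint, rfl⟩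
    obtain ⟨δ, hδ, hval⟩ := hopt T hT hTint
    exact ⟨T, hT, hT1, hTint, δ, hδ, hval.symm⟩
  · refine le_csInf ⟨_, fun _ => 1, isStoppingTime_const _ 1, fun _ => le_refl 1,
      integrable_const _, fun _ => 0, measurable_const, rfl⟩ ?_
    rintro x ⟨T, hT, hT1, hTint, δ, hδ, rfl⟩
    exact le_trans (csInf_le ⟨0, hbd2⟩ ⟨T, hT, hT1, hTint, rfl⟩) (hmono T hT hTint δ hδ)

end
end

section
/- The belief-state pair (Π_k, Z_k) is a Markov chain with an explicit, time-homogeneous transition law: for every k ≥ 1 and every bounded measurable function f : [0,1] × Fin 4 → ℝ, P-almost surely E[f(Π_{k+1}, Z_{k+1}) | F_k] = Σ_{z'=0}^{3} f( Π_k·α_1(z'|Z_k) / (Π_k·α_1(z'|Z_k) + (1 − Π_k)·α_0(z'|Z_k)) , z' ) · ( Π_k·α_1(z'|Z_k) + (1 − Π_k)·α_0(z'|Z_k) ); in particular this conditional expectation is a fixed function of (Π_k, Z_k) not depending on k. -/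
open MeasureTheory ProbabilityTheory

noncomputable section

variable {Ω : Type} [MeasurableSpace Ω]

set_option linter.unusedSectionVars false in
/-- tuple of first `k` observations (1-based). -/
def qsW (Z : ℕ → Ω → Fin 4) (k : ℕ) : Ω → (Fin k → Fin 4) := fun ω j => Z ((j : ℕ) + 1) ω

lemma qsW_measurable (Z : ℕ → Ω → Fin 4) (hZ : ∀ k, Measurable (Z k)) (k : ℕ) :
    Measurable (qsW Z k) :=
  measurable_pi_lambda _ fun _ => hZ _

/-- extend a tuple to an ℕ-indexed path. -/
def qsExt {k : ℕ} (v : Fin k → Fin 4) : ℕ → Fin 4 :=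
  fun j => if h : 1 ≤ j ∧ j ≤ k then v ⟨j - 1, by omega⟩ else 0

def qsSnoc {k : ℕ} (v : Fin k → Fin 4) (z' : Fin 4) : ℕ → Fin 4 :=
  fun j => if j = k + 1 then z' else qsExt v j

def qsL (α : Fin 2 → Fin 4 → Fin 4 → ℝ) (i : Fin 2) (k : ℕ) (zs : ℕ → Fin 4) : ℝ :=
  ∏ j ∈ Finset.Ico 1 k, α i (zs (j + 1)) (zs j)

def qsD (α : Fin 2 → Fin 4 → Fin 4 → ℝ) (π₁ : ℝ) (k : ℕ) (zs : ℕ → Fin 4) : ℝ :=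
  π₁ * qsL α 1 k zs + (1 - π₁) * qsL α 0 k zs

def qsRho (α : Fin 2 → Fin 4 → Fin 4 → ℝ) (π₁ : ℝ) (k : ℕ) (zs : ℕ → Fin 4) : ℝ :=
  π₁ * qsL α 1 k zs / qsD α π₁ k zs

lemma qsL_pos {α : Fin 2 → Fin 4 → Fin 4 → ℝ} (hαpos : ∀ i z z', 0 < α i z' z)
    (i : Fin 2) (k : ℕ) (zs : ℕ → Fin 4) : 0 < qsL α i k zs :=
  Finset.prod_pos fun j _ => hαpos i (zs j) (zs (j + 1))

lemma qsD_pos {α : Fin 2 → Fin 4 → Fin 4 → ℝ} (hαpos : ∀ i z z', 0 < α i z' z)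
    {π₁ : ℝ} (hπ : π₁ ∈ Set.Ioo (0 : ℝ) 1) (k : ℕ) (zs : ℕ → Fin 4) :
    0 < qsD α π₁ k zs :=
  add_pos (mul_pos hπ.1 (qsL_pos hαpos 1 k zs))
    (mul_pos (by linarith [hπ.2]) (qsL_pos hαpos 0 k zs))

lemma qsL_congr {α : Fin 2 → Fin 4 → Fin 4 → ℝ} (i : Fin 2) (k : ℕ)
    {zs zs' : ℕ → Fin 4} (h : ∀ j, 1 ≤ j → j ≤ k → zs j = zs' j) :
    qsL α i k zs = qsL α i k zs' := by
  refine Finset.prod_congr rfl fun j hj => ?_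
  rw [Finset.mem_Ico] at hj
  rw [h j hj.1 (by omega), h (j + 1) (by omega) (by omega)]

lemma qsRho_congr {α : Fin 2 → Fin 4 → Fin 4 → ℝ} (π₁ : ℝ) (k : ℕ)
    {zs zs' : ℕ → Fin 4} (h : ∀ j, 1 ≤ j → j ≤ k → zs j = zs' j) :
    qsRho α π₁ k zs = qsRho α π₁ k zs' := by
  unfold qsRho qsD
  rw [qsL_congr 1 k h, qsL_congr 0 k h]

set_option linter.unusedSectionVars false in
lemma qsExt_W {Z : ℕ → Ω → Fin 4} {k : ℕ} (ω : Ω) :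
    ∀ j, 1 ≤ j → j ≤ k → qsExt (qsW Z k ω) j = Z j ω := by
  intro j h1 h2
  rw [qsExt, dif_pos ⟨h1, h2⟩]
  show Z ((j - 1) + 1) ω = Z j ω
  congr 1; omega

set_option linter.unusedSectionVars false in
lemma mem_atom_iff {Z : ℕ → Ω → Fin 4} {k : ℕ} (v : Fin k → Fin 4) (ω : Ω) :
    qsW Z k ω = v ↔ ∀ j, 1 ≤ j → j ≤ k → Z j ω = qsExt v j := by
  constructor
  · intro h j h1 h2
    rw [← h]
    exact (qsExt_W ω j h1 h2).symm
  · intro h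
    funext j
    have hj := h ((j : ℕ) + 1) (by omega) (by omega)
    show Z ((j : ℕ) + 1) ω = v j
    rw [hj, qsExt, dif_pos ⟨by omega, by omega⟩]
    exact congrArg v (Fin.ext (by simp))

set_option linter.unusedSectionVars false in
lemma mem_atom_succ_iff {Z : ℕ → Ω → Fin 4} {k : ℕ} (v : Fin k → Fin 4) (z' : Fin 4) (ω : Ω) :
    (qsW Z k ω = v ∧ Z (k + 1) ω = z')
      ↔ ∀ j, 1 ≤ j → j ≤ k + 1 → Z j ω = qsSnoc v z' j := by
  constructor
  · rintro ⟨h1, h2⟩ j hj1 hj2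
    by_cases hjk : j = k + 1
    · subst hjk
      rw [qsSnoc, if_pos rfl]
      exact h2
    · rw [qsSnoc, if_neg hjk]
      exact (mem_atom_iff v ω).1 h1 j hj1 (by omega)
  · intro h
    refine ⟨(mem_atom_iff v ω).2 fun j h1 h2 => ?_, ?_⟩
    · rw [h j h1 (by omega), qsSnoc, if_neg (by omega)]
    · have := h (k + 1) (by omega) le_rfl
      rwa [qsSnoc, if_pos rfl] at this

lemma qsL_snoc {α : Fin 2 → Fin 4 → Fin 4 → ℝ} (i : Fin 2) {k : ℕ} (hk : 1 ≤ k)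
    (v : Fin k → Fin 4) (z' : Fin 4) :
    qsL α i (k + 1) (qsSnoc v z') = qsL α i k (qsExt v) * α i z' (qsExt v k) := by
  unfold qsL
  rw [Finset.prod_Ico_succ_top hk]
  congr 1
  · refine Finset.prod_congr rfl fun j hj => ?_
    rw [Finset.mem_Ico] at hj
    rw [qsSnoc, if_neg (by omega), qsSnoc, if_neg (by omega)]
  · rw [qsSnoc, if_pos rfl, qsSnoc, if_neg (by omega)]

lemma qsFiltration_eq (Z : ℕ → Ω → Fin 4) (hZ : ∀ k, Measurable (Z k)) (k : ℕ) :
    qsFiltration Z hZ k = MeasurableSpace.comap (qsW Z k) inferInstance := by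
  apply le_antisymm
  · refine iSup₂_le fun j hj => ?_
    obtain ⟨hj1, hj2⟩ := hj
    have h3 : Z j = (fun v : Fin k → Fin 4 => v ⟨j - 1, by omega⟩) ∘ qsW Z k := by
      funext ω
      show Z j ω = Z ((j - 1) + 1) ω
      congr 1; omega
    rw [h3, ← MeasurableSpace.comap_comp]
    exact MeasurableSpace.comap_mono (measurable_pi_apply _).comap_le
  · show MeasurableSpace.comap (qsW Z k) MeasurableSpace.pi ≤ _
    rw [MeasurableSpace.pi, MeasurableSpace.comap_iSup]
    refine iSup_le fun j => ?_
    rw [MeasurableSpace.comap_comp]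
    have h2 : ((fun v : Fin k → Fin 4 => v j) ∘ qsW Z k) = Z ((j : ℕ) + 1) := rfl
    rw [h2]
    have h1 : ((j : ℕ) + 1) ∈ Set.Icc 1 k := Set.mem_Icc.2 ⟨by omega, by omega⟩
    exact le_biSup (fun j' => MeasurableSpace.comap (Z j') inferInstance) h1

lemma split_theta (P : Measure Ω) [IsProbabilityMeasure P] {Θ : Ω → Fin 2} (hΘ : Measurable Θ)
    {A : Set Ω} (hA : MeasurableSet A) :
    (P A).toReal
      = (P ({ω | Θ ω = 0} ∩ A)).toReal + (P ({ω | Θ ω = 1} ∩ A)).toReal := by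
  have hdecomp : A = ({ω | Θ ω = 0} ∩ A) ∪ ({ω | Θ ω = 1} ∩ A) := by
    ext ω
    have h : Θ ω = 0 ∨ Θ ω = 1 := by omega
    simp only [Set.mem_union, Set.mem_inter_iff, Set.mem_setOf_eq]
    tauto
  have hdisj : Disjoint ({ω | Θ ω = 0} ∩ A) ({ω | Θ ω = 1} ∩ A) := by
    refine Set.disjoint_left.2 fun ω h0 h1 => ?_
    have g0 := h0.1; have g1 := h1.1
    simp only [Set.mem_setOf_eq] at g0 g1
    rw [g0] at g1; exact absurd g1 (by decide)
  nth_rewrite 1 [hdecomp]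
  rw [measure_union hdisj ((hΘ (measurableSet_singleton 1)).inter hA),
    ENNReal.toReal_add (measure_ne_top P _) (measure_ne_top P _)]

lemma condexp_comap_finite (P : Measure Ω) [IsProbabilityMeasure P]
    {ι : Type} [Fintype ι] [Nonempty ι] [MeasurableSpace ι] [MeasurableSingletonClass ι]
    {W : Ω → ι} (hW : Measurable W)
    {g : Ω → ℝ} (hg : Integrable g P) (G : ι → ℝ)
    (hatom : ∀ v, ∫ ω in W ⁻¹' {v}, g ω ∂P = G v * (P (W ⁻¹' {v})).toReal) :
    (fun ω => G (W ω)) =ᵐ[P] P[g | MeasurableSpace.comap W inferInstance] := by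
  classical
  have hm : MeasurableSpace.comap W inferInstance ≤ ‹MeasurableSpace Ω› := hW.comap_le
  have hGW : Measurable fun ω => G (W ω) := (measurable_of_countable G).comp hW
  obtain ⟨C, hC⟩ : ∃ C : ℝ, ∀ v, |G v| ≤ C :=
    ⟨Finset.univ.sup' ⟨Classical.arbitrary ι, Finset.mem_univ _⟩ fun v => |G v|,
      fun v => Finset.le_sup' (fun v => |G v|) (Finset.mem_univ v)⟩
  have hGint : Integrable (fun ω => G (W ω)) P :=
    (integrable_const C).mono' hGW.aestronglyMeasurable (Filter.Eventually.of_forall fun ω => hC _)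
  have hGatom : ∀ v, ∫ ω in W ⁻¹' {v}, G (W ω) ∂P = G v * (P (W ⁻¹' {v})).toReal := by
    intro v
    rw [setIntegral_congr_fun (hW (measurableSet_singleton v))
      (fun ω hω => by simp only [Set.mem_preimage, Set.mem_singleton_iff] at hω; rw [hω]),
      setIntegral_const, smul_eq_mul, mul_comm]
    rfl
  refine ae_eq_condExp_of_forall_setIntegral_eq hm hg
    (fun s _ _ => hGint.integrableOn) (fun s hs _ => ?_) ?_
  · obtain ⟨S, -, rfl⟩ := hs
    have hdecomp : W ⁻¹' S = ⋃ v ∈ S.toFinset, W ⁻¹' {v} := by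
      ext ω; simp
    have hdisj : (S.toFinset : Set ι).PairwiseDisjoint fun v => W ⁻¹' {v} := by
      intro a _ b _ hab
      exact Set.disjoint_left.2 fun ω ha hb => hab (by
        simp only [Set.mem_preimage, Set.mem_singleton_iff] at ha hb; rw [← ha, ← hb])
    have hmeas : ∀ v ∈ S.toFinset, MeasurableSet (W ⁻¹' {v}) :=
      fun v _ => hW (measurableSet_singleton v)
    rw [hdecomp, integral_biUnion_finset S.toFinset hmeas hdisj (fun v _ => hGint.integrableOn),
      integral_biUnion_finset S.toFinset hmeas hdisj (fun v _ => hg.integrableOn)]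
    exact Finset.sum_congr rfl fun v _ => by rw [hGatom v, hatom v]
  · exact StronglyMeasurable.aestronglyMeasurable
      (Measurable.stronglyMeasurable
        ((measurable_of_countable G).comp (Measurable.of_comap_le le_rfl)))

lemma qs_atom_theta {P : Measure Ω} {Θ : Ω → Fin 2} {Z : ℕ → Ω → Fin 4}
    {α : Fin 2 → Fin 4 → Fin 4 → ℝ} {π₁ : ℝ} (hlaw : IsQSLaw P Θ Z α π₁)
    {k : ℕ} (hk : 1 ≤ k) (v : Fin k → Fin 4) (i : Fin 2) :
    (P ({ω | Θ ω = i} ∩ qsW Z k ⁻¹' {v})).toReal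
      = (if i = 1 then π₁ else 1 - π₁) * (1 / 4) * qsL α i k (qsExt v) := by
  have hset : {ω | Θ ω = i} ∩ qsW Z k ⁻¹' {v}
      = {ω | Θ ω = i ∧ ∀ j, 1 ≤ j → j ≤ k → Z j ω = qsExt v j} := by
    ext ω
    simp only [Set.mem_inter_iff, Set.mem_setOf_eq, Set.mem_preimage, Set.mem_singleton_iff,
      mem_atom_iff]
  rw [hset]
  exact hlaw k hk i (qsExt v)

lemma qs_atom_measure {P : Measure Ω} [IsProbabilityMeasure P] {Θ : Ω → Fin 2}
    (hΘ : Measurable Θ) {Z : ℕ → Ω → Fin 4} (hZ : ∀ k, Measurable (Z k))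
    {α : Fin 2 → Fin 4 → Fin 4 → ℝ} {π₁ : ℝ} (hlaw : IsQSLaw P Θ Z α π₁)
    {k : ℕ} (hk : 1 ≤ k) (v : Fin k → Fin 4) :
    (P (qsW Z k ⁻¹' {v})).toReal = (1 / 4) * qsD α π₁ k (qsExt v) := by
  have hA : MeasurableSet (qsW Z k ⁻¹' {v}) :=
    qsW_measurable Z hZ k (measurableSet_singleton v)
  rw [split_theta P hΘ hA, qs_atom_theta hlaw hk v 0, qs_atom_theta hlaw hk v 1,
    if_neg (by decide), if_pos rfl]
  unfold qsD qsL; ring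

lemma qs_atom_succ_measure {P : Measure Ω} [IsProbabilityMeasure P] {Θ : Ω → Fin 2}
    (hΘ : Measurable Θ) {Z : ℕ → Ω → Fin 4} (hZ : ∀ k, Measurable (Z k))
    {α : Fin 2 → Fin 4 → Fin 4 → ℝ} {π₁ : ℝ} (hlaw : IsQSLaw P Θ Z α π₁)
    {k : ℕ} (hk : 1 ≤ k) (v : Fin k → Fin 4) (z' : Fin 4) :
    (P (qsW Z k ⁻¹' {v} ∩ Z (k + 1) ⁻¹' {z'})).toReal
      = (1 / 4) * qsD α π₁ (k + 1) (qsSnoc v z') := by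
  have hA : MeasurableSet (qsW Z k ⁻¹' {v} ∩ Z (k + 1) ⁻¹' {z'}) :=
    (qsW_measurable Z hZ k (measurableSet_singleton v)).inter
      (hZ (k + 1) (measurableSet_singleton z'))
  have hset : ∀ i : Fin 2, {ω | Θ ω = i} ∩ (qsW Z k ⁻¹' {v} ∩ Z (k + 1) ⁻¹' {z'})
      = {ω | Θ ω = i ∧ ∀ j, 1 ≤ j → j ≤ k + 1 → Z j ω = qsSnoc v z' j} := by
    intro i
    ext ω
    simp only [Set.mem_inter_iff, Set.mem_setOf_eq, Set.mem_preimage, Set.mem_singleton_iff,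
      ← mem_atom_succ_iff v z' ω, and_assoc]
  rw [split_theta P hΘ hA, hset 0, hset 1, hlaw (k + 1) (by omega) 0 (qsSnoc v z'),
    hlaw (k + 1) (by omega) 1 (qsSnoc v z'), if_neg (by decide), if_pos rfl]
  unfold qsD qsL; ring

lemma qs_posterior_eq {P : Measure Ω} [IsProbabilityMeasure P] {Θ : Ω → Fin 2}
    (hΘ : Measurable Θ) {Z : ℕ → Ω → Fin 4} (hZ : ∀ k, Measurable (Z k))
    {α : Fin 2 → Fin 4 → Fin 4 → ℝ} (hαpos : ∀ i z z', 0 < α i z' z)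
    {π₁ : ℝ} (hπ : π₁ ∈ Set.Ioo (0 : ℝ) 1) (hlaw : IsQSLaw P Θ Z α π₁)
    {k : ℕ} (hk : 1 ≤ k) :
    qsPosterior P Θ Z hZ k =ᵐ[P] fun ω => qsRho α π₁ k (fun j => Z j ω) := by
  have hW := qsW_measurable Z hZ k
  have hmeasθ : MeasurableSet {ω | Θ ω = 1} := hΘ (measurableSet_singleton 1)
  have hind_eq : (fun ω : Ω => if Θ ω = 1 then (1 : ℝ) else 0)
      = Set.indicator {ω | Θ ω = 1} (fun _ => (1 : ℝ)) := by
    funext ω; by_cases h : Θ ω = 1 <;> simp [Set.indicator_apply, h]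
  have hind_int : Integrable (fun ω : Ω => if Θ ω = 1 then (1 : ℝ) else 0) P := by
    rw [hind_eq]; exact (integrable_const 1).indicator hmeasθ
  have hatom : ∀ v : Fin k → Fin 4,
      ∫ ω in qsW Z k ⁻¹' {v}, (if Θ ω = 1 then (1 : ℝ) else 0) ∂P
        = qsRho α π₁ k (qsExt v) * (P (qsW Z k ⁻¹' {v})).toReal := by
    intro v
    rw [hind_eq, setIntegral_indicator hmeasθ, setIntegral_const, smul_eq_mul, mul_one, measureReal_def,
      Set.inter_comm, qs_atom_theta hlaw hk v 1, if_pos rfl,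
      qs_atom_measure hΘ hZ hlaw hk v]
    have hD := qsD_pos hαpos hπ k (qsExt v)
    rw [qsRho]
    field_simp
  have h := condexp_comap_finite P hW hind_int (fun v => qsRho α π₁ k (qsExt v)) hatom
  rw [qsPosterior, qsFiltration_eq Z hZ k]
  exact h.symm.trans (Filter.Eventually.of_forall fun ω =>
    qsRho_congr π₁ k fun j h1 h2 => qsExt_W ω j h1 h2)

/-- The belief-state pair `(Π_k, Z_k)` is a Markov chain with an
explicit time-homogeneous transition law: for every `k ≥ 1` and every bounded
measurable `f : ℝ × Fin 4 → ℝ`, `P`-almost surely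
`E[f(Π_{k+1}, Z_{k+1}) | F_k]
  = ∑_{z'} f(Π_k α₁(z'|Z_k) / (Π_k α₁(z'|Z_k) + (1-Π_k) α₀(z'|Z_k)), z')
      ⬝ (Π_k α₁(z'|Z_k) + (1-Π_k) α₀(z'|Z_k))`;
in particular this conditional expectation is a fixed function of `(Π_k, Z_k)`
not depending on `k`. -/
theorem quickstop_belief_state_markov
    {Ω : Type} [MeasurableSpace Ω] (P : Measure Ω) [IsProbabilityMeasure P]
    (Θ : Ω → Fin 2) (Z : ℕ → Ω → Fin 4)
    (hΘ : Measurable Θ) (hZ : ∀ k, Measurable (Z k))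
    (α : Fin 2 → Fin 4 → Fin 4 → ℝ)
    (hαpos : ∀ i z z', 0 < α i z' z)
    (hαsum : ∀ i z, ∑ z', α i z' z = 1)
    (π₁ : ℝ) (hπ : π₁ ∈ Set.Ioo (0 : ℝ) 1)
    (hlaw : IsQSLaw P Θ Z α π₁) :
    ∀ k : ℕ, 1 ≤ k → ∀ f : ℝ × Fin 4 → ℝ, Measurable f → (∃ C : ℝ, ∀ p, |f p| ≤ C) →
      P[fun ω => f (qsPosterior P Θ Z hZ (k + 1) ω, Z (k + 1) ω) | qsFiltration Z hZ k]
        =ᵐ[P] fun ω =>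
          ∑ z' : Fin 4,
            f (qsPosterior P Θ Z hZ k ω * α 1 z' (Z k ω)
                / (qsPosterior P Θ Z hZ k ω * α 1 z' (Z k ω)
                    + (1 - qsPosterior P Θ Z hZ k ω) * α 0 z' (Z k ω)), z')
              * (qsPosterior P Θ Z hZ k ω * α 1 z' (Z k ω)
                  + (1 - qsPosterior P Θ Z hZ k ω) * α 0 z' (Z k ω)) := by
  intro k hk f hf hfbdd
  obtain ⟨C, hC⟩ := hfbdd
  have hW := qsW_measurable Z hZ k
  have hg'meas : Measurable (fun ω => f (qsRho α π₁ (k + 1) (fun j => Z j ω), Z (k + 1) ω)) := by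
    have hfac : (fun ω => f (qsRho α π₁ (k + 1) (fun j => Z j ω), Z (k + 1) ω))
        = fun ω => f (qsRho α π₁ (k + 1) (qsExt (qsW Z (k + 1) ω)), Z (k + 1) ω) := by
      funext ω
      exact congrArg (fun t => f (t, Z (k + 1) ω))
        (qsRho_congr π₁ (k + 1) fun j h1 h2 => (qsExt_W ω j h1 h2).symm)
    have hF1 : Measurable fun ω => qsRho α π₁ (k + 1) (qsExt (qsW Z (k + 1) ω)) :=
      (measurable_of_countable (fun v : Fin (k + 1) → Fin 4 => qsRho α π₁ (k + 1) (qsExt v))).comp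
        (qsW_measurable Z hZ (k + 1))
    rw [hfac]
    exact hf.comp (hF1.prodMk (hZ (k + 1)))
  have hg'int : Integrable (fun ω => f (qsRho α π₁ (k + 1) (fun j => Z j ω), Z (k + 1) ω)) P :=
    (integrable_const C).mono' hg'meas.aestronglyMeasurable
      (Filter.Eventually.of_forall fun ω => hC _)
  set G : (Fin k → Fin 4) → ℝ := fun v =>
    ∑ z' : Fin 4,
      f (qsRho α π₁ k (qsExt v) * α 1 z' (qsExt v k)
          / (qsRho α π₁ k (qsExt v) * α 1 z' (qsExt v k)
              + (1 - qsRho α π₁ k (qsExt v)) * α 0 z' (qsExt v k)), z')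
        * (qsRho α π₁ k (qsExt v) * α 1 z' (qsExt v k)
            + (1 - qsRho α π₁ k (qsExt v)) * α 0 z' (qsExt v k)) with hG
  have hatom : ∀ v, ∫ ω in qsW Z k ⁻¹' {v},
      f (qsRho α π₁ (k + 1) (fun j => Z j ω), Z (k + 1) ω) ∂P
      = G v * (P (qsW Z k ⁻¹' {v})).toReal := by
    intro v
    have hmeasz : ∀ z' : Fin 4, MeasurableSet (qsW Z k ⁻¹' {v} ∩ Z (k + 1) ⁻¹' {z'}) :=
      fun z' => (hW (measurableSet_singleton v)).inter (hZ (k + 1) (measurableSet_singleton z'))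
    have hdecomp : qsW Z k ⁻¹' {v}
        = ⋃ z' ∈ (Finset.univ : Finset (Fin 4)), (qsW Z k ⁻¹' {v} ∩ Z (k + 1) ⁻¹' {z'}) := by
      ext ω
      constructor
      · intro hv
        exact Set.mem_biUnion (Finset.mem_univ (Z (k + 1) ω)) ⟨hv, rfl⟩
      · intro hmem
        simp only [Set.mem_iUnion] at hmem
        obtain ⟨z', -, hz⟩ := hmem
        exact hz.1
    have hdisj : ((Finset.univ : Finset (Fin 4)) : Set (Fin 4)).PairwiseDisjoint
        fun z' => qsW Z k ⁻¹' {v} ∩ Z (k + 1) ⁻¹' {z'} := by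
      intro a _ b _ hab
      refine Set.disjoint_left.2 fun ω h1 h2 => hab ?_
      have e1 : Z (k + 1) ω = a := h1.2
      have e2 : Z (k + 1) ω = b := h2.2
      rw [← e1, ← e2]
    rw [hdecomp, integral_biUnion_finset Finset.univ (fun z' _ => hmeasz z') hdisj
      (fun z' _ => hg'int.integrableOn)]
    have hterm : ∀ z' : Fin 4,
        ∫ ω in qsW Z k ⁻¹' {v} ∩ Z (k + 1) ⁻¹' {z'},
            f (qsRho α π₁ (k + 1) (fun j => Z j ω), Z (k + 1) ω) ∂P
          = f (qsRho α π₁ (k + 1) (qsSnoc v z'), z')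
              * ((1 / 4) * qsD α π₁ (k + 1) (qsSnoc v z')) := by
      intro z'
      rw [setIntegral_congr_fun (g := fun _ => f (qsRho α π₁ (k + 1) (qsSnoc v z'), z'))
          (hmeasz z')
          (fun ω hω => by
            have hv : qsW Z k ω = v := hω.1
            have hz : Z (k + 1) ω = z' := hω.2
            have hall := (mem_atom_succ_iff v z' ω).1 ⟨hv, hz⟩
            have e1 : qsRho α π₁ (k + 1) (fun j => Z j ω)
                = qsRho α π₁ (k + 1) (qsSnoc v z') := qsRho_congr π₁ (k + 1) hall
            show f (qsRho α π₁ (k + 1) (fun j => Z j ω), Z (k + 1) ω) = _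
            rw [e1, hz]),
        setIntegral_const, measureReal_def, smul_eq_mul, mul_comm,
        qs_atom_succ_measure hΘ hZ hlaw hk v z']
    set ρ := qsRho α π₁ k (qsExt v) with hρ
    set a := π₁ * qsL α 1 k (qsExt v) with ha
    set b := (1 - π₁) * qsL α 0 k (qsExt v) with hb
    have hapos : 0 < a := mul_pos hπ.1 (qsL_pos hαpos 1 k (qsExt v))
    have hbpos : 0 < b := mul_pos (by linarith [hπ.2]) (qsL_pos hαpos 0 k (qsExt v))
    have habne : a + b ≠ 0 := ne_of_gt (by linarith)
    have hab : qsD α π₁ k (qsExt v) = a + b := rfl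
    have hρab : ρ = a / (a + b) := rfl
    have hterm2 : ∀ z' : Fin 4,
        f (qsRho α π₁ (k + 1) (qsSnoc v z'), z') * ((1 / 4) * qsD α π₁ (k + 1) (qsSnoc v z'))
          = f (ρ * α 1 z' (qsExt v k)
                / (ρ * α 1 z' (qsExt v k) + (1 - ρ) * α 0 z' (qsExt v k)), z')
              * (ρ * α 1 z' (qsExt v k) + (1 - ρ) * α 0 z' (qsExt v k))
              * ((1 / 4) * (a + b)) := by
      intro z'
      set a1 := α 1 z' (qsExt v k) with ha1
      set a0 := α 0 z' (qsExt v k) with ha0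
      have h1 : 0 < a1 := hαpos 1 (qsExt v k) z'
      have h0 : 0 < a0 := hαpos 0 (qsExt v k) z'
      have hdenne : a * a1 + b * a0 ≠ 0 :=
        ne_of_gt (add_pos (mul_pos hapos h1) (mul_pos hbpos h0))
      have hLs : qsD α π₁ (k + 1) (qsSnoc v z') = a * a1 + b * a0 := by
        rw [qsD, qsL_snoc 1 hk v z', qsL_snoc 0 hk v z', ha, hb, ha1, ha0]; ring
      have hRs : qsRho α π₁ (k + 1) (qsSnoc v z') = a * a1 / (a * a1 + b * a0) := by
        rw [qsRho, hLs, qsL_snoc 1 hk v z', ha, ha1]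
        all_goals ring
      have hρ1 : (1 : ℝ) - ρ = b / (a + b) := by
        rw [hρab]; field_simp
        all_goals ring
      have hsum : ρ * a1 + (1 - ρ) * a0 = (a * a1 + b * a0) / (a + b) := by
        rw [hρ1, hρab]; field_simp
        all_goals ring
      have harg : ρ * a1 / (ρ * a1 + (1 - ρ) * a0) = a * a1 / (a * a1 + b * a0) := by
        rw [hsum, hρab]
        field_simp
        all_goals ring
      have hw : (1 / 4 : ℝ) * (a * a1 + b * a0)
          = (ρ * a1 + (1 - ρ) * a0) * (1 / 4 * (a + b)) := by
        rw [hsum]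
        field_simp
        all_goals ring
      rw [hLs, hRs, ← harg, hw, ← mul_assoc]
    rw [Finset.sum_congr rfl fun z' _ => by rw [hterm z', hterm2 z'], ← hdecomp,
      qs_atom_measure hΘ hZ hlaw hk v, hab, ← Finset.sum_mul]
  have h2 := condexp_comap_finite P hW hg'int G hatom
  have hpost1 := qs_posterior_eq hΘ hZ hαpos hπ hlaw (k := k + 1) (by omega)
  have hpostk := qs_posterior_eq hΘ hZ hαpos hπ hlaw (k := k) hk
  have h1 : (fun ω => f (qsPosterior P Θ Z hZ (k + 1) ω, Z (k + 1) ω)) =ᵐ[P]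
      (fun ω => f (qsRho α π₁ (k + 1) (fun j => Z j ω), Z (k + 1) ω)) :=
    hpost1.mono fun ω h => congrArg (fun t => f (t, Z (k + 1) ω)) h
  have hfinal : (fun ω => G (qsW Z k ω)) =ᵐ[P] fun ω =>
      ∑ z' : Fin 4,
        f (qsPosterior P Θ Z hZ k ω * α 1 z' (Z k ω)
            / (qsPosterior P Θ Z hZ k ω * α 1 z' (Z k ω)
                + (1 - qsPosterior P Θ Z hZ k ω) * α 0 z' (Z k ω)), z')
          * (qsPosterior P Θ Z hZ k ω * α 1 z' (Z k ω)
              + (1 - qsPosterior P Θ Z hZ k ω) * α 0 z' (Z k ω)) := by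
    refine hpostk.mono fun ω h => ?_
    have e1 : qsRho α π₁ k (qsExt (qsW Z k ω)) = qsRho α π₁ k (fun j => Z j ω) :=
      qsRho_congr π₁ k fun j hj1 hj2 => qsExt_W ω j hj1 hj2
    have e2 : qsExt (qsW Z k ω) k = Z k ω := qsExt_W ω k hk le_rfl
    have h' : qsPosterior P Θ Z hZ k ω = qsRho α π₁ k (fun j => Z j ω) := h
    show G (qsW Z k ω) = _
    simp only [hG]
    rw [e1, e2, ← h']
  rw [qsFiltration_eq Z hZ k]
  exact (condExp_congr_ae h1).trans (h2.symm.trans hfinal)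

end
end

section
/- Decomposition of the optimal cost over the uniform initial observation: under the original model P (prior π_1, Z_1 uniform on Fin 4), the minimum expected total cost s_1* = inf over a.s. finite stopping times T ≥ 1 with E[T] < ∞ (with respect to (F_k)) of E[g(Π_T) + c·T·Π_T] satisfies s_1* = (1/4)·Σ_{z=0}^{3} s_1(π_1, z), where s_1(π, z) is the value function of the chain started with belief π and initial observation z. -/
open MeasureTheory ProbabilityTheory

noncomputable section

variable {Ω : Type} [MeasurableSpace Ω]

open scoped ENNReal NNReal
open MeasurableSpace

namespace QSAux


def qsM (Θ : Ω → Fin 2) (Z : ℕ → Ω → Fin 4) : MeasurableSpace Ω :=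
  MeasurableSpace.comap Θ inferInstance ⊔ ⨆ j ∈ Set.Ici 1, MeasurableSpace.comap (Z j) inferInstance

variable {Θ : Ω → Fin 2} {Z : ℕ → Ω → Fin 4}

lemma qsM_le (hΘ : Measurable Θ) (hZ : ∀ k, Measurable (Z k)) :
    qsM Θ Z ≤ ‹MeasurableSpace Ω› :=
  sup_le hΘ.comap_le (iSup₂_le fun j _ => (hZ j).comap_le)

lemma filtration_le (hZ : ∀ k, Measurable (Z k)) (k : ℕ) :
    (qsFiltration Z hZ k : MeasurableSpace Ω) ≤ qsM Θ Z :=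
  le_sup_of_le_right (biSup_mono fun j hj => hj.1)

lemma qsM_theta (i : Fin 2) : MeasurableSet[qsM Θ Z] {ω | Θ ω = i} :=
  (le_sup_left : MeasurableSpace.comap Θ inferInstance ≤ qsM Θ Z) _
    ⟨{i}, trivial, by ext ω; simp [Set.preimage]⟩

lemma qsM_Z {j : ℕ} (hj : 1 ≤ j) (w : Fin 4) : MeasurableSet[qsM Θ Z] {ω | Z j ω = w} := by
  have h1 : MeasurableSpace.comap (Z j) inferInstance ≤ qsM Θ Z := by
    refine le_trans ?_ (le_sup_right (a := MeasurableSpace.comap Θ inferInstance))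
    exact le_biSup (fun j => MeasurableSpace.comap (Z j) inferInstance) (Set.mem_Ici.2 hj)
  exact h1 _ ⟨{w}, trivial, by ext ω; simp [Set.preimage]⟩

lemma Z1_mem_filtration (hZ : ∀ k, Measurable (Z k)) {k : ℕ} (hk : 1 ≤ k) (z : Fin 4) :
    MeasurableSet[qsFiltration Z hZ k] {ω | Z 1 ω = z} := by
  have h1 : MeasurableSpace.comap (Z 1) inferInstance ≤ (qsFiltration Z hZ k : MeasurableSpace Ω) :=
    le_biSup (fun j => MeasurableSpace.comap (Z j) inferInstance) (Set.mem_Icc.2 ⟨le_refl 1, hk⟩)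
  exact h1 _ ⟨{z}, trivial, by ext ω; simp [Set.preimage]⟩

def qsCyl (Θ : Ω → Fin 2) (Z : ℕ → Ω → Fin 4) (i : Fin 2) (k : ℕ) (zs : ℕ → Fin 4) : Set Ω :=
  {ω | Θ ω = i ∧ ∀ j, 1 ≤ j → j ≤ k → Z j ω = zs j}

def qsCylSet (Θ : Ω → Fin 2) (Z : ℕ → Ω → Fin 4) : Set (Set Ω) :=
  {s | ∃ i k zs, 1 ≤ k ∧ s = qsCyl Θ Z i k zs}

lemma isPiSystem_qsCylSet : IsPiSystem (qsCylSet Θ Z) := by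
  rintro s ⟨i, k, zs, hk, rfl⟩ t ⟨i', k', zs', hk', rfl⟩ hne
  obtain ⟨ω, ⟨hΘ1, hZ1⟩, ⟨hΘ2, hZ2⟩⟩ := hne
  refine ⟨i, max k k', fun j => if j ≤ k then zs j else zs' j,
    le_trans hk (le_max_left _ _), ?_⟩
  have hagree : ∀ j, 1 ≤ j → j ≤ k → j ≤ k' → zs j = zs' j := fun j h1 h2 h3 =>
    (hZ1 j h1 h2).symm.trans (hZ2 j h1 h3)
  ext ω'
  constructor
  · rintro ⟨⟨h1, h2⟩, h3, h4⟩
    refine ⟨h1, fun j hj1 hj2 => ?_⟩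
    by_cases hjk : j ≤ k
    · simp [hjk, h2 j hj1 hjk]
    · have hjk' : j ≤ k' := by omega
      simp [hjk, h4 j hj1 hjk']
  · rintro ⟨h1, h2⟩
    refine ⟨⟨h1, fun j hj1 hj2 => ?_⟩, h1.trans (hΘ1.symm.trans hΘ2), fun j hj1 hj2 => ?_⟩
    · have := h2 j hj1 (le_trans hj2 (le_max_left _ _))
      simpa [hj2] using this
    · have := h2 j hj1 (le_trans hj2 (le_max_right _ _))
      by_cases hjk : j ≤ k
      · rw [← hagree j hj1 hjk hj2]; simpa [hjk] using this
      · simpa [hjk] using this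

lemma measurableSet_qsCyl (i : Fin 2) {k : ℕ} (zs : ℕ → Fin 4) :
    MeasurableSet[qsM Θ Z] (qsCyl Θ Z i k zs) := by
  have h : qsCyl Θ Z i k zs = {ω | Θ ω = i} ∩ ⋂ j : ℕ, {ω | 1 ≤ j → j ≤ k → Z j ω = zs j} := by
    ext ω; simp [qsCyl, Set.mem_iInter]
  rw [h]
  refine (qsM_theta i).inter (MeasurableSet.iInter fun j => ?_)
  by_cases h1 : 1 ≤ j
  · by_cases h2 : j ≤ k
    · have : {ω | 1 ≤ j → j ≤ k → Z j ω = zs j} = {ω | Z j ω = zs j} := by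
        ext ω; simp [h1, h2]
      rw [this]; exact qsM_Z h1 _
    · have : {ω | 1 ≤ j → j ≤ k → Z j ω = zs j} = Set.univ := by
        ext ω; simp [h2]
      rw [this]; exact MeasurableSet.univ
  · have : {ω | 1 ≤ j → j ≤ k → Z j ω = zs j} = Set.univ := by
      ext ω; simp [h1]
    rw [this]; exact MeasurableSet.univ

lemma qsM_eq_generateFrom : qsM Θ Z = MeasurableSpace.generateFrom (qsCylSet Θ Z) := by
  apply le_antisymm
  · apply sup_le
    · rintro s ⟨t, -, rfl⟩
      have : Θ ⁻¹' t = ⋃ i ∈ t, ⋃ z : Fin 4, qsCyl Θ Z i 1 (fun _ => z) := by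
        ext ω
        simp only [Set.mem_preimage, Set.mem_iUnion, qsCyl, Set.mem_setOf_eq]
        constructor
        · intro h
          exact ⟨Θ ω, h, Z 1 ω, rfl, fun j h1 h2 => by
            have : j = 1 := le_antisymm h2 h1; subst this; rfl⟩
        · rintro ⟨i, hi, z, h1, -⟩; rw [h1]; exact hi
      rw [this]
      exact MeasurableSet.biUnion (Set.to_countable _) fun i _ =>
        MeasurableSet.iUnion fun z =>
          MeasurableSpace.measurableSet_generateFrom ⟨i, 1, _, le_refl 1, rfl⟩
    · refine iSup₂_le fun j hj => ?_
      rintro s ⟨t, -, rfl⟩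
      have hj1 : 1 ≤ j := hj
      have : Z j ⁻¹' t = ⋃ w ∈ t, ⋃ i : Fin 2, ⋃ v : Fin (j+1) → Fin 4,
          ⋃ _ : v ⟨j, Nat.lt_succ_self j⟩ = w,
            qsCyl Θ Z i j (fun n => if h : n < j + 1 then v ⟨n, h⟩ else 0) := by
        ext ω
        simp only [Set.mem_preimage, Set.mem_iUnion, qsCyl, Set.mem_setOf_eq]
        constructor
        · intro h
          refine ⟨Z j ω, h, Θ ω, fun l => Z l.1 ω, rfl, rfl, fun n h1 h2 => ?_⟩
          have hn : n < j + 1 := Nat.lt_succ_of_le h2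
          simp [hn]
        · rintro ⟨w, hw, i, v, hv, -, h2⟩
          have := h2 j hj1 (le_refl j)
          simp only [Nat.lt_succ_self, dif_pos] at this
          rw [this, hv]; exact hw
      rw [this]
      exact MeasurableSet.biUnion (Set.to_countable _) fun w _ =>
        MeasurableSet.iUnion fun i => MeasurableSet.iUnion fun v => MeasurableSet.iUnion fun hv =>
          MeasurableSpace.measurableSet_generateFrom ⟨i, j, _, hj1, rfl⟩
  · exact MeasurableSpace.generateFrom_le (by rintro s ⟨i, k, zs, hk, rfl⟩; exact measurableSet_qsCyl i zs)


section Measures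

variable (hΘ : Measurable Θ) (hZ : ∀ k, Measurable (Z k))
include hΘ hZ

lemma measure_eq_on_qsM (μ ν : Measure Ω) [IsFiniteMeasure μ] [IsFiniteMeasure ν]
    (hC : ∀ s ∈ qsCylSet Θ Z, μ s = ν s) (huniv : μ Set.univ = ν Set.univ) :
    ∀ A, MeasurableSet[qsM Θ Z] A → μ A = ν A := by
  intro A hA
  have hle := qsM_le hΘ hZ
  have htrim : μ.trim hle = ν.trim hle := by
    refine ext_of_generate_finite (qsCylSet Θ Z) qsM_eq_generateFrom isPiSystem_qsCylSet ?_ ?_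
    · rintro s hs
      obtain ⟨i, k, zs, hk, rfl⟩ := hs
      rw [trim_measurableSet_eq hle (measurableSet_qsCyl i zs),
        trim_measurableSet_eq hle (measurableSet_qsCyl i zs)]
      exact hC _ ⟨i, k, zs, hk, rfl⟩
    · rw [trim_measurableSet_eq hle MeasurableSet.univ,
        trim_measurableSet_eq hle MeasurableSet.univ, huniv]
  rw [← trim_measurableSet_eq hle hA, ← trim_measurableSet_eq hle hA, htrim]

variable (P : Measure Ω) [IsProbabilityMeasure P]
variable {α : Fin 2 → Fin 4 → Fin 4 → ℝ} {π₁ : ℝ}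

lemma P_Z1 (hlaw : IsQSLaw P Θ Z α π₁) (z : Fin 4) :
    P {ω | Z 1 ω = z} = (4 : ℝ≥0∞)⁻¹ := by
  have hset : {ω | Z 1 ω = z} = ⋃ i : Fin 2, qsCyl Θ Z i 1 (fun _ => z) := by
    ext ω
    simp only [Set.mem_setOf_eq, Set.mem_iUnion, qsCyl]
    constructor
    · intro h
      exact ⟨Θ ω, rfl, fun j h1 h2 => by
        have : j = 1 := le_antisymm h2 h1; subst this; exact h⟩
    · rintro ⟨i, -, h⟩; exact h 1 le_rfl le_rfl
  have hdisj : Pairwise (Function.onFun Disjoint fun i : Fin 2 => qsCyl Θ Z i 1 (fun _ => z)) := by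
    intro i i' hii
    simp only [Function.onFun, Set.disjoint_left]
    rintro ω ⟨h1, -⟩ ⟨h2, -⟩
    exact hii (h1.symm.trans h2)
  have hmeas : ∀ i : Fin 2, MeasurableSet (qsCyl Θ Z i 1 (fun _ => z)) :=
    fun i => qsM_le hΘ hZ _ (measurableSet_qsCyl i _)
  rw [hset, measure_iUnion hdisj hmeas, tsum_fintype, Fin.sum_univ_two]
  refine (ENNReal.toReal_eq_toReal_iff' (by finiteness) (by norm_num)).mp ?_
  rw [ENNReal.toReal_add (measure_ne_top _ _) (measure_ne_top _ _)]
  have h0 : (P (qsCyl Θ Z 0 1 fun _ => z)).toReal = (1 - π₁) * (1/4) := by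
    have := hlaw 1 le_rfl 0 (fun _ => z)
    simp only [Finset.Ico_self, Finset.prod_empty, mul_one] at this
    exact this.trans (by norm_num)
  have h1 : (P (qsCyl Θ Z 1 1 fun _ => z)).toReal = π₁ * (1/4) := by
    have := hlaw 1 le_rfl 1 (fun _ => z)
    simp only [Finset.Ico_self, Finset.prod_empty, mul_one] at this
    exact this.trans (by norm_num)
  rw [h0, h1]
  norm_num
  ring

lemma pf_measure_eq {z : Fin 4} (hlaw : IsQSLaw P Θ Z α π₁)
    (μ : Measure Ω) [IsProbabilityMeasure μ] (hμ : IsQSLawFrom μ Θ Z α π₁ z) :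
    ∀ A, MeasurableSet[qsM Θ Z] A →
      μ A = ((4 : ℝ≥0∞) • P.restrict {ω | Z 1 ω = z}) A := by
  haveI : IsFiniteMeasure ((4 : ℝ≥0∞) • P.restrict {ω | Z 1 ω = z}) := by
    constructor
    rw [Measure.smul_apply, smul_eq_mul]
    exact ENNReal.mul_lt_top (by norm_num) (measure_lt_top _ _)
  refine measure_eq_on_qsM hΘ hZ μ _ ?_ ?_
  · rintro s ⟨i, k, zs, hk, rfl⟩
    have hcylmeas : MeasurableSet (qsCyl Θ Z i k zs) := qsM_le hΘ hZ _ (measurableSet_qsCyl i zs)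
    rw [Measure.smul_apply, smul_eq_mul, Measure.restrict_apply hcylmeas]
    by_cases h : zs 1 = z
    · have hsub : qsCyl Θ Z i k zs ∩ {ω | Z 1 ω = z} = qsCyl Θ Z i k zs := by
        refine Set.inter_eq_left.2 fun ω hω => ?_
        exact (hω.2 1 le_rfl hk).trans h
      rw [hsub]
      refine (ENNReal.toReal_eq_toReal_iff' (measure_ne_top _ _)
        (ENNReal.mul_ne_top (by norm_num) (measure_ne_top _ _))).mp ?_
      rw [ENNReal.toReal_mul]
      have hμc := hμ k hk i zs
      have hPc := hlaw k hk i zs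
      rw [if_pos h] at hμc
      calc (μ (qsCyl Θ Z i k zs)).toReal
          = (if i = 1 then π₁ else 1 - π₁) * ∏ j ∈ Finset.Ico 1 k, α i (zs (j+1)) (zs j) := hμc
        _ = (4:ℝ≥0∞).toReal * (P (qsCyl Θ Z i k zs)).toReal := by
            have hPc' : (P (qsCyl Θ Z i k zs)).toReal
                = (if i = 1 then π₁ else 1 - π₁) * (1 / 4) *
                  ∏ j ∈ Finset.Ico 1 k, α i (zs (j + 1)) (zs j) := hPc
            rw [hPc']
            rw [show ((4:ℝ≥0∞)).toReal = (4:ℝ) from by norm_num]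
            ring
    · have hempty : qsCyl Θ Z i k zs ∩ {ω | Z 1 ω = z} = ∅ := by
        ext ω
        simp only [Set.mem_inter_iff, Set.mem_empty_iff_false, iff_false, not_and,
          Set.mem_setOf_eq]
        intro hω hz
        exact h ((hω.2 1 le_rfl hk).symm.trans hz)
      rw [hempty, measure_empty, mul_zero]
      have hμc := hμ k hk i zs
      rw [if_neg h] at hμc
      rcases (ENNReal.toReal_eq_zero_iff _).mp hμc with h' | h'
      · exact h'
      · exact absurd h' (measure_ne_top _ _)
  · rw [Measure.smul_apply, smul_eq_mul, Measure.restrict_apply MeasurableSet.univ,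
      Set.univ_inter, P_Z1 hΘ hZ P hlaw z, measure_univ]
    rw [ENNReal.mul_inv_cancel (by norm_num) (by norm_num)]


end Measures

section Transfer
variable (hΘ : Measurable Θ) (hZ : ∀ k, Measurable (Z k))
include hΘ hZ

lemma integrable_iff_of_eq_on_qsM (μ ν : Measure Ω)
    (heq : ∀ A, MeasurableSet[qsM Θ Z] A → μ A = ν A)
    {f : Ω → ℝ} (hf : StronglyMeasurable[qsM Θ Z] f) :
    Integrable f μ ↔ Integrable f ν := by
  have hle := qsM_le hΘ hZ
  have htrim : μ.trim hle = ν.trim hle := by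
    refine @Measure.ext Ω (qsM Θ Z) _ _ ?_
    intro s hs
    rw [trim_measurableSet_eq hle hs, trim_measurableSet_eq hle hs, heq s hs]
  constructor
  · intro h; exact integrable_of_integrable_trim hle (htrim ▸ h.trim hle hf)
  · intro h; exact integrable_of_integrable_trim hle (htrim.symm ▸ h.trim hle hf)

lemma integral_eq_of_eq_on_qsM (μ ν : Measure Ω)
    (heq : ∀ A, MeasurableSet[qsM Θ Z] A → μ A = ν A)
    {f : Ω → ℝ} (hf : StronglyMeasurable[qsM Θ Z] f) :
    ∫ ω, f ω ∂μ = ∫ ω, f ω ∂ν := by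
  have hle := qsM_le hΘ hZ
  have htrim : μ.trim hle = ν.trim hle := by
    refine @Measure.ext Ω (qsM Θ Z) _ _ ?_
    intro s hs
    rw [trim_measurableSet_eq hle hs, trim_measurableSet_eq hle hs, heq s hs]
  rw [integral_trim hle hf, integral_trim hle hf, htrim]

variable (P : Measure Ω) [IsProbabilityMeasure P]
variable {α : Fin 2 → Fin 4 → Fin 4 → ℝ} {π₁ : ℝ}

lemma pf_integrable_iff {z : Fin 4} (hlaw : IsQSLaw P Θ Z α π₁)
    (μ : Measure Ω) [IsProbabilityMeasure μ] (hμ : IsQSLawFrom μ Θ Z α π₁ z)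
    {f : Ω → ℝ} (hf : StronglyMeasurable[qsM Θ Z] f) :
    Integrable f μ ↔ IntegrableOn f {ω | Z 1 ω = z} P :=
  (integrable_iff_of_eq_on_qsM hΘ hZ μ _ (pf_measure_eq hΘ hZ P hlaw μ hμ) hf).trans
    (integrable_smul_measure (by norm_num) (by norm_num))

lemma pf_integral {z : Fin 4} (hlaw : IsQSLaw P Θ Z α π₁)
    (μ : Measure Ω) [IsProbabilityMeasure μ] (hμ : IsQSLawFrom μ Θ Z α π₁ z)
    {f : Ω → ℝ} (hf : StronglyMeasurable[qsM Θ Z] f) :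
    ∫ ω, f ω ∂μ = 4 * ∫ ω in {ω | Z 1 ω = z}, f ω ∂P := by
  rw [integral_eq_of_eq_on_qsM hΘ hZ μ _ (pf_measure_eq hΘ hZ P hlaw μ hμ) hf,
    integral_smul_measure]
  norm_num

lemma global_integrable_iff (hlaw : IsQSLaw P Θ Z α π₁)
    (μf : Fin 4 → Measure Ω) [∀ z, IsProbabilityMeasure (μf z)]
    (hμf : ∀ z, IsQSLawFrom (μf z) Θ Z α π₁ z)
    {f : Ω → ℝ} (hf : StronglyMeasurable[qsM Θ Z] f) :
    Integrable f P ↔ ∀ z, Integrable f (μf z) := by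
  have key : ∀ z, Integrable f (μf z) ↔ IntegrableOn f {ω | Z 1 ω = z} P :=
    fun z => pf_integrable_iff hΘ hZ P hlaw (μf z) (hμf z) hf
  have huniv : (Set.univ : Set Ω) = ⋃ z ∈ Finset.univ, {ω | Z 1 ω = z} := by
    ext ω; simp
  constructor
  · intro h z; rw [key z]; exact h.integrableOn
  · intro h
    rw [← integrableOn_univ, huniv]
    exact integrableOn_finset_iUnion.2 fun z _ => (key z).mp (h z)

lemma global_integral (hlaw : IsQSLaw P Θ Z α π₁)
    (μf : Fin 4 → Measure Ω) [∀ z, IsProbabilityMeasure (μf z)]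
    (hμf : ∀ z, IsQSLawFrom (μf z) Θ Z α π₁ z)
    {f : Ω → ℝ} (hf : StronglyMeasurable[qsM Θ Z] f) (hint : Integrable f P) :
    ∫ ω, f ω ∂P = (1/4) * ∑ z : Fin 4, ∫ ω, f ω ∂(μf z) := by
  have huniv : (Set.univ : Set Ω) = ⋃ z ∈ Finset.univ, {ω | Z 1 ω = z} := by
    ext ω; simp
  have hmeasz : ∀ z : Fin 4, MeasurableSet {ω | Z 1 ω = z} :=
    fun z => qsM_le hΘ hZ _ (qsM_Z le_rfl z)
  have hdisj : Set.Pairwise (↑(Finset.univ : Finset (Fin 4)))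
      (Function.onFun Disjoint fun z : Fin 4 => {ω | Z 1 ω = z}) := by
    intro z _ z' _ hzz
    simp only [Function.onFun, Set.disjoint_left]
    rintro ω h1 h2
    exact hzz (h1.symm.trans h2)
  have h1 : ∫ ω, f ω ∂P = ∑ z : Fin 4, ∫ ω in {ω | Z 1 ω = z}, f ω ∂P := by
    rw [← setIntegral_univ, huniv,
      integral_biUnion_finset Finset.univ (fun z _ => hmeasz z) hdisj
        (fun z _ => hint.integrableOn)]
  rw [h1, Finset.mul_sum]
  refine Finset.sum_congr rfl fun z _ => ?_
  rw [pf_integral hΘ hZ P hlaw (μf z) (hμf z) hf]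
  ring

end Transfer

section Condexp
variable (hΘ : Measurable Θ) (hZ : ∀ k, Measurable (Z k))

lemma theta_indicator_eq :
    (fun ω => if Θ ω = 1 then (1:ℝ) else 0)
      = Set.indicator {ω | Θ ω = 1} (fun _ => (1:ℝ)) := by
  funext ω; by_cases h : Θ ω = 1 <;> simp [Set.indicator, h]

lemma theta_SM : StronglyMeasurable[qsM Θ Z] (fun ω => if Θ ω = 1 then (1:ℝ) else 0) := by
  rw [theta_indicator_eq]
  exact stronglyMeasurable_const.indicator (qsM_theta 1)

lemma theta_integrable (hΘ : Measurable Θ) (μ : Measure Ω) [IsFiniteMeasure μ] :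
    Integrable (fun ω => if Θ ω = 1 then (1:ℝ) else 0) μ := by
  rw [theta_indicator_eq]
  exact (integrable_const 1).indicator (hΘ (measurableSet_singleton 1))

lemma posterior_SM (μ : Measure Ω) (k : ℕ) :
    StronglyMeasurable[qsM Θ Z] (qsPosterior μ Θ Z hZ k) :=
  stronglyMeasurable_condExp.mono (filtration_le hZ k)

lemma posterior_mem (hΘ : Measurable Θ) (μ : Measure Ω) [IsProbabilityMeasure μ] (k : ℕ) :
    ∀ᵐ ω ∂μ, qsPosterior μ Θ Z hZ k ω ∈ Set.Icc (0:ℝ) 1 := by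
  have h0 : 0 ≤ᵐ[μ] qsPosterior μ Θ Z hZ k :=
    condExp_nonneg (ae_of_all _ fun ω => by by_cases h : Θ ω = 1 <;> simp [h])
  have h1 : qsPosterior μ Θ Z hZ k ≤ᵐ[μ] fun _ => (1:ℝ) := by
    have hmono := condExp_mono (m := qsFiltration Z hZ k) (μ := μ)
      (f := fun ω => if Θ ω = 1 then (1:ℝ) else 0) (g := fun _ => (1:ℝ))
      (theta_integrable hΘ μ) (integrable_const (1:ℝ))
      (ae_of_all _ fun ω => by by_cases h : Θ ω = 1 <;> simp [h])
    rw [condExp_const ((qsFiltration Z hZ).le k) (1:ℝ)] at hmono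
    exact hmono
  filter_upwards [h0, h1] with ω ha hb
  exact ⟨ha, hb⟩

variable (P : Measure Ω) [IsProbabilityMeasure P]
variable {α : Fin 2 → Fin 4 → Fin 4 → ℝ} {π₁ : ℝ}

lemma posterior_transfer (hΘ : Measurable Θ) (hlaw : IsQSLaw P Θ Z α π₁) {z : Fin 4}
    (μ : Measure Ω) [IsProbabilityMeasure μ] (hμ : IsQSLawFrom μ Θ Z α π₁ z)
    {k : ℕ} (hk : 1 ≤ k) :
    qsPosterior P Θ Z hZ k =ᵐ[μ] qsPosterior μ Θ Z hZ k := by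
  have hFle : (qsFiltration Z hZ k : MeasurableSpace Ω) ≤ ‹MeasurableSpace Ω› :=
    (qsFiltration Z hZ).le k
  have hFm : (qsFiltration Z hZ k : MeasurableSpace Ω) ≤ qsM Θ Z := filtration_le hZ k
  have hfP : Integrable (fun ω => if Θ ω = 1 then (1:ℝ) else 0) P := theta_integrable hΘ P
  have hfμ : Integrable (fun ω => if Θ ω = 1 then (1:ℝ) else 0) μ := theta_integrable hΘ μ
  have hBzF : MeasurableSet[qsFiltration Z hZ k] {ω | Z 1 ω = z} := Z1_mem_filtration hZ hk z
  have heq := pf_measure_eq hΘ hZ P hlaw μ hμ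
  have hgSM : StronglyMeasurable[qsM Θ Z] (qsPosterior P Θ Z hZ k) := posterior_SM hZ P k
  have hgint : Integrable (qsPosterior P Θ Z hZ k) μ := by
    rw [integrable_iff_of_eq_on_qsM hΘ hZ μ _ heq hgSM,
      integrable_smul_measure (by norm_num) (by norm_num)]
    exact integrable_condExp.integrableOn
  have key : ∀ (s : Set Ω), MeasurableSet[qsFiltration Z hZ k] s →
      ∀ (h : Ω → ℝ), StronglyMeasurable[qsM Θ Z] h →
        ∫ x in s, h x ∂μ = 4 * ∫ x in s ∩ {ω | Z 1 ω = z}, h x ∂P := by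
    intro s hs h hh
    have hs0 : MeasurableSet s := hFle s hs
    have hsm : MeasurableSet[qsM Θ Z] s := hFm s hs
    rw [← integral_indicator hs0,
      integral_eq_of_eq_on_qsM hΘ hZ μ _ heq (hh.indicator hsm),
      integral_smul_measure, integral_indicator hs0, Measure.restrict_restrict hs0]
    norm_num
  refine ae_eq_condExp_of_forall_setIntegral_eq hFle hfμ
    (fun s hs _ => hgint.integrableOn) (fun s hs _ => ?_)
    (StronglyMeasurable.aestronglyMeasurable stronglyMeasurable_condExp)
  rw [key s hs _ hgSM, key s hs _ theta_SM]
  congr 1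
  exact setIntegral_condExp hFle hfP (hs.inter hBzF)

end Condexp

section Cost
variable (hΘ : Measurable Θ) (hZ : ∀ k, Measurable (Z k))

lemma stopping_measurable {T : Ω → ℕ}
    (hT : IsStoppingTime (qsFiltration Z hZ) (fun ω => (T ω : WithTop ℕ))) :
    Measurable[qsM Θ Z] T := by
  exact @measurable_to_countable' ℕ Ω _ _ (qsM Θ Z) T
    (fun n => filtration_le hZ n _ (by simpa [Set.preimage] using hT.measurableSet_eq n))

lemma cost_SM (cI cII c : ℝ) {T : Ω → ℕ} (hT : Measurable[qsM Θ Z] T)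
    (Pst : ℕ → Ω → ℝ) (hPst : ∀ n, StronglyMeasurable[qsM Θ Z] (Pst n)) :
    StronglyMeasurable[qsM Θ Z]
      (fun ω => qsG cI cII (Pst (T ω) ω) + c * (T ω : ℝ) * Pst (T ω) ω) := by
  have key : @Measurable (Ω × ℕ) ℝ (@Prod.instMeasurableSpace Ω ℕ (qsM Θ Z) inferInstance) _
      (fun p : Ω × ℕ => qsG cI cII (Pst p.2 p.1) + c * (p.2 : ℝ) * Pst p.2 p.1) := by
    refine measurable_from_prod_countable_left fun n => ?_
    have hPn : Measurable[qsM Θ Z] (Pst n) := (hPst n).measurable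
    simp only [qsG]
    exact ((hPn.const_mul cII).min ((measurable_const.sub hPn).const_mul cI)).add
      (hPn.const_mul (c * (n : ℝ)))
  have hpair : @Measurable Ω (Ω × ℕ) (qsM Θ Z)
      (@Prod.instMeasurableSpace Ω ℕ (qsM Θ Z) inferInstance) (fun ω => (ω, T ω)) :=
    Measurable.prodMk measurable_id hT
  exact (key.comp hpair).stronglyMeasurable

lemma cost_ae_bound (hΘ : Measurable Θ) (μ : Measure Ω) [IsProbabilityMeasure μ]
    (cI cII c : ℝ) (hcI : 0 ≤ cI) (hcII : 0 ≤ cII) (hc : 0 ≤ c) (T : Ω → ℕ) :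
    ∀ᵐ ω ∂μ, 0 ≤ qsG cI cII (qsPosterior μ Θ Z hZ (T ω) ω)
        + c * (T ω : ℝ) * qsPosterior μ Θ Z hZ (T ω) ω
      ∧ qsG cI cII (qsPosterior μ Θ Z hZ (T ω) ω)
        + c * (T ω : ℝ) * qsPosterior μ Θ Z hZ (T ω) ω ≤ cII + c * (T ω : ℝ) := by
  have hall : ∀ᵐ ω ∂μ, ∀ n, qsPosterior μ Θ Z hZ n ω ∈ Set.Icc (0:ℝ) 1 :=
    ae_all_iff.2 (posterior_mem hZ hΘ μ)
  filter_upwards [hall] with ω hω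
  obtain ⟨h0, h1⟩ := hω (T ω)
  have hTnn : (0:ℝ) ≤ (T ω : ℝ) := Nat.cast_nonneg _
  have hg0 : 0 ≤ qsG cI cII (qsPosterior μ Θ Z hZ (T ω) ω) :=
    le_min (mul_nonneg hcII h0) (mul_nonneg hcI (by linarith))
  have hg1 : qsG cI cII (qsPosterior μ Θ Z hZ (T ω) ω) ≤ cII :=
    le_trans (min_le_left _ _) (by nlinarith)
  have hm0 : 0 ≤ c * (T ω : ℝ) * qsPosterior μ Θ Z hZ (T ω) ω :=
    mul_nonneg (mul_nonneg hc hTnn) h0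
  have hm1 : c * (T ω : ℝ) * qsPosterior μ Θ Z hZ (T ω) ω ≤ c * (T ω : ℝ) := by
    nlinarith [mul_nonneg (mul_nonneg hc hTnn) (sub_nonneg.2 h1)]
  exact ⟨by linarith, by linarith⟩

lemma cost_integrable (hΘ : Measurable Θ) (μ : Measure Ω) [IsProbabilityMeasure μ]
    (cI cII c : ℝ) (hcI : 0 ≤ cI) (hcII : 0 ≤ cII) (hc : 0 ≤ c)
    {T : Ω → ℕ} (hTm : Measurable[qsM Θ Z] T)
    (hTint : Integrable (fun ω => (T ω : ℝ)) μ) :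
    Integrable (fun ω => qsG cI cII (qsPosterior μ Θ Z hZ (T ω) ω)
      + c * (T ω : ℝ) * qsPosterior μ Θ Z hZ (T ω) ω) μ := by
  refine Integrable.mono' ((integrable_const cII).add (hTint.const_mul c)) ?_ ?_
  · exact ((cost_SM cI cII c hTm (qsPosterior μ Θ Z hZ)
      (posterior_SM hZ μ)).mono (qsM_le hΘ hZ)).aestronglyMeasurable
  · filter_upwards [cost_ae_bound hZ hΘ μ cI cII c hcI hcII hc T] with ω hω
    rw [Real.norm_eq_abs, abs_of_nonneg hω.1]
    exact hω.2

lemma cost_integral_nonneg (hΘ : Measurable Θ) (μ : Measure Ω) [IsProbabilityMeasure μ]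
    (cI cII c : ℝ) (hcI : 0 ≤ cI) (hcII : 0 ≤ cII) (hc : 0 ≤ c) (T : Ω → ℕ) :
    0 ≤ ∫ ω, (qsG cI cII (qsPosterior μ Θ Z hZ (T ω) ω)
      + c * (T ω : ℝ) * qsPosterior μ Θ Z hZ (T ω) ω) ∂μ := by
  refine integral_nonneg_of_ae ?_
  filter_upwards [cost_ae_bound hZ hΘ μ cI cII c hcI hcII hc T] with ω hω
  exact hω.1

end Cost

lemma csInf_quarter_sum (A : Set ℝ) (B : Fin 4 → Set ℝ)
    (hA0 : ∀ x ∈ A, 0 ≤ x) (hB0 : ∀ z, ∀ x ∈ B z, 0 ≤ x)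
    (hAne : A.Nonempty) (hBne : ∀ z, (B z).Nonempty)
    (h1 : ∀ x ∈ A, ∃ b : Fin 4 → ℝ, (∀ z, b z ∈ B z) ∧ x = (1/4) * ∑ z, b z)
    (h2 : ∀ b : Fin 4 → ℝ, (∀ z, b z ∈ B z) → (1/4) * ∑ z, b z ∈ A) :
    sInf A = (1/4) * ∑ z, sInf (B z) := by
  have hAbdd : BddBelow A := ⟨0, fun x hx => hA0 x hx⟩
  have hBbdd : ∀ z, BddBelow (B z) := fun z => ⟨0, fun x hx => hB0 z x hx⟩
  apply le_antisymm
  · refine le_of_forall_pos_le_add fun ε hε => ?_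
    have hchoice : ∀ z, ∃ x ∈ B z, x < sInf (B z) + ε/4 := fun z =>
      exists_lt_of_csInf_lt (hBne z) (by linarith)
    choose b hb hblt using hchoice
    calc sInf A ≤ (1/4) * ∑ z, b z := csInf_le hAbdd (h2 b hb)
      _ ≤ (1/4) * ∑ z, (sInf (B z) + ε/4) := by
          have : ∑ z, b z ≤ ∑ z, (sInf (B z) + ε/4) :=
            Finset.sum_le_sum fun z _ => (hblt z).le
          linarith
      _ ≤ (1/4) * ∑ z, sInf (B z) + ε := by
          have h4 : ∑ _z : Fin 4, (ε/4) = ε := by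
            rw [Finset.sum_const, Finset.card_univ, Fintype.card_fin]
            push_cast
            ring
          rw [Finset.sum_add_distrib, h4]
          linarith
  · refine le_csInf hAne fun x hx => ?_
    obtain ⟨b, hb, rfl⟩ := h1 x hx
    have hs : ∑ z, sInf (B z) ≤ ∑ z, b z :=
      Finset.sum_le_sum fun z _ => csInf_le (hBbdd z) (hb z)
    linarith

end QSAux

/-- Decomposition of the optimal cost over the uniform initial
observation: under the original model `P` (prior `π₁`, `Z_1` uniform on `Fin 4`),
the minimum expected total cost
`s₁* = inf_T E[g(Π_T) + c T Π_T]` (infimum over a.s. finite stopping times `T ≥ 1`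
with `E[T] < ∞` w.r.t. `(F_k)`) satisfies `s₁* = (1/4) ∑_z s₁(π₁, z)`, where
`s₁(π, z)` is the value function of the chain started with belief `π` and initial
observation `z`. -/
theorem quickstop_value_uniform_decomposition
    {Ω : Type} [MeasurableSpace Ω] (P : Measure Ω) [IsProbabilityMeasure P]
    (Θ : Ω → Fin 2) (Z : ℕ → Ω → Fin 4)
    (hΘ : Measurable Θ) (hZ : ∀ k, Measurable (Z k))
    (α : Fin 2 → Fin 4 → Fin 4 → ℝ)
    (hαpos : ∀ i z z', 0 < α i z' z)
    (hαsum : ∀ i z, ∑ z', α i z' z = 1)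
    (π₁ : ℝ) (hπ : π₁ ∈ Set.Ioo (0 : ℝ) 1)
    (hlaw : IsQSLaw P Θ Z α π₁)
    (cI cII c : ℝ) (hcI : 0 < cI) (hcII : 0 < cII) (hc : 0 < c)
    (Pf : ℝ → Fin 4 → Measure Ω)
    (hPf : ∀ π ∈ Set.Icc (0 : ℝ) 1, ∀ z : Fin 4,
      IsProbabilityMeasure (Pf π z) ∧ IsQSLawFrom (Pf π z) Θ Z α π z) :
    sInf {x : ℝ | ∃ T : Ω → ℕ, IsStoppingTime (qsFiltration Z hZ) (fun ω => (T ω : WithTop ℕ)) ∧ (∀ ω, 1 ≤ T ω) ∧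
        Integrable (fun ω => (T ω : ℝ)) P ∧
        x = ∫ ω, (qsG cI cII (qsPosterior P Θ Z hZ (T ω) ω)
              + c * (T ω : ℝ) * qsPosterior P Θ Z hZ (T ω) ω) ∂P}
      = (1 / 4) * ∑ z : Fin 4, qsValue Pf Θ Z hZ cI cII c π₁ z := by
  classical
  have hπIcc : π₁ ∈ Set.Icc (0:ℝ) 1 := ⟨hπ.1.le, hπ.2.le⟩
  haveI hprob : ∀ z : Fin 4, IsProbabilityMeasure (Pf π₁ z) := fun z => (hPf π₁ hπIcc z).1
  have hlawf : ∀ z : Fin 4, IsQSLawFrom (Pf π₁ z) Θ Z α π₁ z := fun z => (hPf π₁ hπIcc z).2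
  set B : Fin 4 → Set ℝ := fun z =>
    {x : ℝ | ∃ T : Ω → ℕ, IsStoppingTime (qsFiltration Z hZ) (fun ω => (T ω : WithTop ℕ)) ∧ (∀ ω, 1 ≤ T ω) ∧
      Integrable (fun ω => (T ω : ℝ)) (Pf π₁ z) ∧
      x = ∫ ω, (qsG cI cII (qsPosterior (Pf π₁ z) Θ Z hZ (T ω) ω)
            + c * (T ω : ℝ) * qsPosterior (Pf π₁ z) Θ Z hZ (T ω) ω) ∂(Pf π₁ z)} with hB
  show sInf _ = (1/4) * ∑ z : Fin 4, sInf (B z)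
  -- transfer of posteriors, valid for every z
  have htr : ∀ z : Fin 4, ∀ᵐ ω ∂(Pf π₁ z), ∀ n, 1 ≤ n →
      qsPosterior P Θ Z hZ n ω = qsPosterior (Pf π₁ z) Θ Z hZ n ω := by
    intro z
    rw [ae_all_iff]
    intro n
    by_cases hn : 1 ≤ n
    · filter_upwards [QSAux.posterior_transfer hZ P hΘ hlaw (Pf π₁ z) (hlawf z) hn] with ω hω _
      exact hω
    · exact ae_of_all _ fun ω h => absurd h hn
  have haez : ∀ z : Fin 4, ∀ᵐ ω ∂(Pf π₁ z), Z 1 ω = z := by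
    intro z
    have hmeasBz : MeasurableSet {ω | Z 1 ω = z} :=
      QSAux.qsM_le hΘ hZ _ (QSAux.qsM_Z le_rfl z)
    have h1 : (Pf π₁ z) {ω | Z 1 ω = z} = 1 := by
      rw [QSAux.pf_measure_eq hΘ hZ P hlaw (Pf π₁ z) (hlawf z) _ (QSAux.qsM_Z le_rfl z),
        Measure.smul_apply, smul_eq_mul, Measure.restrict_apply hmeasBz, Set.inter_self,
        QSAux.P_Z1 hΘ hZ P hlaw z, ENNReal.mul_inv_cancel (by norm_num) (by norm_num)]
    have h0 : (Pf π₁ z) {ω | Z 1 ω = z}ᶜ = 0 := by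
      rw [measure_compl hmeasBz (measure_ne_top _ _), measure_univ, h1, tsub_self]
    rw [ae_iff]
    exact h0
  refine QSAux.csInf_quarter_sum _ B ?_ ?_ ?_ ?_ ?_ ?_
  · rintro x ⟨T, hT, hT1, hTi, rfl⟩
    exact QSAux.cost_integral_nonneg hZ hΘ P cI cII c hcI.le hcII.le hc.le T
  · rintro z x ⟨T, hT, hT1, hTi, rfl⟩
    exact QSAux.cost_integral_nonneg hZ hΘ (Pf π₁ z) cI cII c hcI.le hcII.le hc.le T
  · exact ⟨_, ⟨fun _ => 1, isStoppingTime_const _ 1, fun ω => le_rfl,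
      by simpa using integrable_const (α := Ω) (μ := P) (1:ℝ), rfl⟩⟩
  · intro z
    exact ⟨_, ⟨fun _ => 1, isStoppingTime_const _ 1, fun ω => le_rfl,
      by simpa using integrable_const (α := Ω) (μ := Pf π₁ z) (1:ℝ), rfl⟩⟩
  · rintro x ⟨T, hT, hT1, hTi, rfl⟩
    have hTm := QSAux.stopping_measurable (Θ := Θ) hZ hT
    have hTcSM : StronglyMeasurable[QSAux.qsM Θ Z] (fun ω => (T ω : ℝ)) :=
      (measurable_from_top.comp hTm).stronglyMeasurable
    have hcostSM := QSAux.cost_SM (Θ := Θ) (Z := Z) cI cII c hTm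
      (qsPosterior P Θ Z hZ) (QSAux.posterior_SM hZ P)
    have hcostint := QSAux.cost_integrable hZ hΘ P cI cII c hcI.le hcII.le hc.le hTm hTi
    refine ⟨fun z => ∫ ω, (qsG cI cII (qsPosterior (Pf π₁ z) Θ Z hZ (T ω) ω)
        + c * (T ω : ℝ) * qsPosterior (Pf π₁ z) Θ Z hZ (T ω) ω) ∂(Pf π₁ z),
      fun z => ⟨T, hT, hT1,
        (QSAux.global_integrable_iff hΘ hZ P hlaw (fun z => Pf π₁ z) hlawf hTcSM).mp hTi z,
        rfl⟩, ?_⟩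
    rw [QSAux.global_integral hΘ hZ P hlaw (fun z => Pf π₁ z) hlawf hcostSM hcostint]
    congr 1
    refine Finset.sum_congr rfl fun z _ => ?_
    refine integral_congr_ae ?_
    filter_upwards [htr z] with ω hω
    rw [hω (T ω) (hT1 ω)]
  · intro b hb
    choose Ts hTs hTs1 hTsi hbx using hb
    set T : Ω → ℕ := fun ω => Ts (Z 1 ω) ω with hTdef
    have hT1 : ∀ ω, 1 ≤ T ω := fun ω => hTs1 _ ω
    have hTstop : IsStoppingTime (qsFiltration Z hZ) (fun ω => (T ω : WithTop ℕ)) := by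
      intro n
      suffices hsuff : MeasurableSet[qsFiltration Z hZ n] {ω | T ω ≤ n} by simpa using hsuff
      rcases Nat.eq_zero_or_pos n with hn | hn
      · subst hn
        have hempty : {ω | T ω ≤ 0} = (∅ : Set Ω) := by
          ext ω
          simp only [Set.mem_setOf_eq, Set.mem_empty_iff_false, iff_false, not_le]
          exact hT1 ω
        rw [show {ω | T ω ≤ 0} = (∅ : Set Ω) from hempty]
        exact @MeasurableSet.empty Ω (qsFiltration Z hZ 0)
      · have hset : {ω | T ω ≤ n} = ⋃ z : Fin 4, ({ω | Z 1 ω = z} ∩ {ω | Ts z ω ≤ n}) := by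
          ext ω
          simp only [Set.mem_setOf_eq, Set.mem_iUnion, Set.mem_inter_iff]
          constructor
          · intro h
            exact ⟨Z 1 ω, rfl, h⟩
          · rintro ⟨z, hz, h⟩
            show Ts (Z 1 ω) ω ≤ n
            rw [hz]
            exact h
        rw [show {ω | T ω ≤ n} = ⋃ z : Fin 4, ({ω | Z 1 ω = z} ∩ {ω | Ts z ω ≤ n}) from hset]
        exact MeasurableSet.iUnion fun z =>
          (QSAux.Z1_mem_filtration hZ hn z).inter (by simpa using hTs z n)
    have hTm := QSAux.stopping_measurable (Θ := Θ) hZ hTstop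
    have hTcSM : StronglyMeasurable[QSAux.qsM Θ Z] (fun ω => (T ω : ℝ)) :=
      (measurable_from_top.comp hTm).stronglyMeasurable
    have haeT : ∀ z : Fin 4, (fun ω => (T ω : ℝ)) =ᵐ[Pf π₁ z] (fun ω => (Ts z ω : ℝ)) := by
      intro z
      filter_upwards [haez z] with ω h
      show ((Ts (Z 1 ω) ω : ℕ) : ℝ) = ((Ts z ω : ℕ) : ℝ)
      rw [h]
    have hTiz : ∀ z : Fin 4, Integrable (fun ω => (T ω : ℝ)) (Pf π₁ z) :=
      fun z => (hTsi z).congr (haeT z).symm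
    have hTi : Integrable (fun ω => (T ω : ℝ)) P :=
      (QSAux.global_integrable_iff hΘ hZ P hlaw (fun z => Pf π₁ z) hlawf hTcSM).mpr hTiz
    have hcostSM := QSAux.cost_SM (Θ := Θ) (Z := Z) cI cII c hTm
      (qsPosterior P Θ Z hZ) (QSAux.posterior_SM hZ P)
    have hcostint := QSAux.cost_integrable hZ hΘ P cI cII c hcI.le hcII.le hc.le hTm hTi
    refine ⟨T, hTstop, hT1, hTi, ?_⟩
    rw [QSAux.global_integral hΘ hZ P hlaw (fun z => Pf π₁ z) hlawf hcostSM hcostint]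
    congr 1
    refine Finset.sum_congr rfl fun z _ => ?_
    rw [hbx z]
    refine (integral_congr_ae ?_).symm
    filter_upwards [haez z, htr z] with ω h1 h2
    have hTω : T ω = Ts z ω := by
      show Ts (Z 1 ω) ω = Ts z ω
      rw [h1]
    rw [hTω, h2 (Ts z ω) (hTs1 z ω)]

end
end
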